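/- arXiv:1611.02012 — 3 statements merged into one kernel-verified Lean document; each statement's English description precedes it below -/
import Mathlib

section
/- The subgroup of the symmetric group S_{2n} consisting of permutations π that preserve both the pairing B = {{1,2},{3,4},...,{2n-1,2n}} and the pairing W = {{2,3},{4,5},...,{2n,1}} has exactly 2n elements. -/
noncomputable section

lemma sym2_map_mul {β : Type*} (a b : Equiv.Perm β) (p : Sym2 β) :
    Sym2.map (a * b : Equiv.Perm β) p = Sym2.map a (Sym2.map b p) := by
  induction p using Sym2.ind with
  | _ x y => simp [Equiv.Perm.mul_apply]

/-- The permutations `π` of the edge-sides leaving invariant both pairings `I`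
and `J` (in the sense that `{a,b} ∈ I ↔ {π a, π b} ∈ I` and likewise for `J`)
form a subgroup of the symmetric group. -/
def preservedSubgroup {β : Type*} (I J : Set (Sym2 β)) : Subgroup (Equiv.Perm β) where
  carrier := {π | (∀ p, p ∈ I ↔ Sym2.map π p ∈ I) ∧ (∀ p, p ∈ J ↔ Sym2.map π p ∈ J)}
  one_mem' := by constructor <;> intro p <;> simp
  mul_mem' := by
    rintro a b ⟨ha1, ha2⟩ ⟨hb1, hb2⟩
    constructor <;> intro p
    · exact (hb1 p).trans ((ha1 _).trans (by rw [sym2_map_mul]))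
    · exact (hb2 p).trans ((ha2 _).trans (by rw [sym2_map_mul]))
  inv_mem' := by
    rintro a ⟨ha1, ha2⟩
    constructor <;> intro p
    · have := (ha1 (Sym2.map (a⁻¹ : Equiv.Perm _) p)).symm
      rw [← sym2_map_mul, mul_inv_cancel] at this
      simpa using this
    · have := (ha2 (Sym2.map (a⁻¹ : Equiv.Perm _) p)).symm
      rw [← sym2_map_mul, mul_inv_cancel] at this
      simpa using this

/-- The pairing of the edge-sides of the standard `2n`-gon (sides labelled
cyclically by `Fin (2n)`) which share a corner at a black vertex. -/
def polygonB (n : ℕ) : Set (Sym2 (Fin (2 * n))) :=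
  {p | ∃ k : Fin (2 * n), Even k.val ∧ p = s(k, finRotate (2 * n) k)}

/-- The pairing of the edge-sides of the standard `2n`-gon which share a corner
at a white vertex. -/
def polygonW (n : ℕ) : Set (Sym2 (Fin (2 * n))) :=
  {p | ∃ k : Fin (2 * n), ¬ Even k.val ∧ p = s(k, finRotate (2 * n) k)}

namespace PGAux

open scoped Fin.CommRing

def par {N : ℕ} (a : Fin N) : ZMod 2 := (a.val : ZMod 2)

lemma zmod2_cases (x : ZMod 2) : x = 0 ∨ x = 1 := by revert x; decide

lemma natCast_mod {N : ℕ} (hd : 2 ∣ N) (x : ℕ) : ((x % N : ℕ) : ZMod 2) = (x : ZMod 2) := by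
  have hN : (N : ZMod 2) = 0 := (ZMod.natCast_eq_zero_iff N 2).mpr hd
  conv_rhs => rw [← Nat.mod_add_div x N]
  push_cast
  rw [hN]; ring

lemma par_add {N : ℕ} (hd : 2 ∣ N) (a b : Fin N) : par (a + b) = par a + par b := by
  unfold par
  rw [Fin.val_add, natCast_mod hd]
  push_cast; ring

lemma par_zero {N : ℕ} [NeZero N] : par (0 : Fin N) = 0 := by
  simp [par]

lemma par_neg {N : ℕ} [NeZero N] (hd : 2 ∣ N) (a : Fin N) : par (-a) = par a := by
  have h := par_add hd (-a) a
  rw [neg_add_cancel, par_zero] at h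
  have h2 : ∀ x y : ZMod 2, x + y = 0 → x = y := by decide
  exact h2 _ _ h.symm

lemma par_sub {N : ℕ} [NeZero N] (hd : 2 ∣ N) (a b : Fin N) :
    par (a - b) = par a + par b := by
  rw [sub_eq_add_neg, par_add hd, par_neg hd]

lemma par_one {N : ℕ} [NeZero N] (h2 : 2 ≤ N) : par (1 : Fin N) = 1 := by
  unfold par
  rw [Fin.val_one' N, Nat.mod_eq_of_lt (by omega)]
  simp

lemma even_iff_par {N : ℕ} (a : Fin N) : Even a.val ↔ par a = 0 := by
  rw [par, ZMod.natCast_eq_zero_iff, ← even_iff_two_dvd]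

lemma par_natCast {N : ℕ} [NeZero N] (hd : 2 ∣ N) (m : ℕ) :
    par ((m : Fin N)) = (m : ZMod 2) := by
  unfold par
  rw [Fin.val_natCast, natCast_mod hd]

def Badj {N : ℕ} [NeZero N] (a b : Fin N) : Prop :=
  (par a = 0 ∧ b = a + 1) ∨ (par b = 0 ∧ a = b + 1)

def Wadj {N : ℕ} [NeZero N] (a b : Fin N) : Prop :=
  (par a = 1 ∧ b = a + 1) ∨ (par b = 1 ∧ a = b + 1)

def f {N : ℕ} [NeZero N] (c : Fin N) : Equiv.Perm (Fin N) :=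
  if par c = 0 then Equiv.addRight c else Equiv.subLeft c

lemma f_zero {N : ℕ} [NeZero N] (c : Fin N) : f c 0 = c := by
  unfold f; split <;> simp

lemma Badj_shift {N : ℕ} [NeZero N] (hd : 2 ∣ N) {c a b : Fin N} (hc : par c = 0)
    (h : Badj a b) : Badj (a + c) (b + c) := by
  rcases h with ⟨h0, rfl⟩ | ⟨h0, rfl⟩
  · exact Or.inl ⟨by rw [par_add hd, h0, hc]; ring, by ring⟩
  · exact Or.inr ⟨by rw [par_add hd, h0, hc]; ring, by ring⟩

lemma Wadj_shift {N : ℕ} [NeZero N] (hd : 2 ∣ N) {c a b : Fin N} (hc : par c = 0)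
    (h : Wadj a b) : Wadj (a + c) (b + c) := by
  rcases h with ⟨h0, rfl⟩ | ⟨h0, rfl⟩
  · exact Or.inl ⟨by rw [par_add hd, h0, hc]; ring, by ring⟩
  · exact Or.inr ⟨by rw [par_add hd, h0, hc]; ring, by ring⟩

lemma Badj_reflect {N : ℕ} [NeZero N] (hd : 2 ∣ N) (h2 : 2 ≤ N) {c a b : Fin N}
    (hc : par c = 1) (h : Badj a b) : Badj (c - a) (c - b) := by
  rcases h with ⟨h0, rfl⟩ | ⟨h0, rfl⟩
  · refine Or.inr ⟨?_, by ring⟩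
    rw [par_sub hd, par_add hd, h0, hc, par_one h2]; decide
  · refine Or.inl ⟨?_, by ring⟩
    rw [par_sub hd, par_add hd, h0, hc, par_one h2]; decide

lemma Wadj_reflect {N : ℕ} [NeZero N] (hd : 2 ∣ N) (h2 : 2 ≤ N) {c a b : Fin N}
    (hc : par c = 1) (h : Wadj a b) : Wadj (c - a) (c - b) := by
  rcases h with ⟨h0, rfl⟩ | ⟨h0, rfl⟩
  · refine Or.inr ⟨?_, by ring⟩
    rw [par_sub hd, par_add hd, h0, hc, par_one h2]; decide
  · refine Or.inl ⟨?_, by ring⟩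
    rw [par_sub hd, par_add hd, h0, hc, par_one h2]; decide

lemma Badj_fst_zero {N : ℕ} [NeZero N] (hd : 2 ∣ N) (h2 : 2 ≤ N) {a b : Fin N}
    (ha : par a = 0) (h : Badj a b) : b = a + 1 := by
  rcases h with ⟨_, rfl⟩ | ⟨h0, rfl⟩
  · rfl
  · rw [par_add hd, h0, par_one h2] at ha; exact absurd ha (by decide)

lemma Badj_fst_one {N : ℕ} [NeZero N] {a b : Fin N}
    (ha : par a = 1) (h : Badj a b) : b = a - 1 := by
  rcases h with ⟨h0, rfl⟩ | ⟨h0, rfl⟩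
  · rw [h0] at ha; exact absurd ha (by decide)
  · ring

lemma Wadj_fst_one {N : ℕ} [NeZero N] (hd : 2 ∣ N) (h2 : 2 ≤ N) {a b : Fin N}
    (ha : par a = 1) (h : Wadj a b) : b = a + 1 := by
  rcases h with ⟨_, rfl⟩ | ⟨h0, rfl⟩
  · rfl
  · rw [par_add hd, h0, par_one h2] at ha; exact absurd ha (by decide)

lemma Wadj_fst_zero {N : ℕ} [NeZero N] {a b : Fin N}
    (ha : par a = 0) (h : Wadj a b) : b = a - 1 := by
  rcases h with ⟨h0, rfl⟩ | ⟨h0, rfl⟩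
  · rw [h0] at ha; exact absurd ha (by decide)
  · ring

lemma rot_apply {N : ℕ} [NeZero N] (h2 : 2 ≤ N) (k : Fin N) :
    finRotate N k = k + 1 := by
  obtain ⟨m, rfl⟩ : ∃ m, N = m + 2 := ⟨N - 2, by omega⟩
  exact finRotate_succ_apply k

lemma memB_iff (n : ℕ) (hn : 1 ≤ n) [NeZero (2 * n)] (a b : Fin (2 * n)) :
    s(a, b) ∈ polygonB n ↔ Badj a b := by
  have h2 : 2 ≤ 2 * n := by omega
  simp only [polygonB, Set.mem_setOf_eq, rot_apply h2]
  constructor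
  · rintro ⟨k, hk, heq⟩
    rw [Sym2.eq_iff] at heq
    rw [even_iff_par] at hk
    rcases heq with ⟨rfl, rfl⟩ | ⟨rfl, rfl⟩
    · exact Or.inl ⟨hk, rfl⟩
    · exact Or.inr ⟨hk, rfl⟩
  · rintro (⟨h0, rfl⟩ | ⟨h0, rfl⟩)
    · exact ⟨a, (even_iff_par a).mpr h0, rfl⟩
    · exact ⟨b, (even_iff_par b).mpr h0, Sym2.eq_swap⟩

lemma memW_iff (n : ℕ) (hn : 1 ≤ n) [NeZero (2 * n)] (a b : Fin (2 * n)) :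
    s(a, b) ∈ polygonW n ↔ Wadj a b := by
  have h2 : 2 ≤ 2 * n := by omega
  have hone : ∀ x : ZMod 2, ¬ x = 0 ↔ x = 1 := by decide
  simp only [polygonW, Set.mem_setOf_eq, rot_apply h2]
  constructor
  · rintro ⟨k, hk, heq⟩
    rw [Sym2.eq_iff] at heq
    rw [even_iff_par, hone] at hk
    rcases heq with ⟨rfl, rfl⟩ | ⟨rfl, rfl⟩
    · exact Or.inl ⟨hk, rfl⟩
    · exact Or.inr ⟨hk, rfl⟩
  · rintro (⟨h0, rfl⟩ | ⟨h0, rfl⟩)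
    · exact ⟨a, (even_iff_par a).not.mpr (by simp [h0]), rfl⟩
    · exact ⟨b, (even_iff_par b).not.mpr (by simp [h0]), Sym2.eq_swap⟩

lemma mem_preserved (n : ℕ) (hn : 1 ≤ n) [NeZero (2 * n)] (π : Equiv.Perm (Fin (2 * n)))
    (hB : ∀ a b : Fin (2 * n), Badj a b ↔ Badj (π a) (π b))
    (hW : ∀ a b : Fin (2 * n), Wadj a b ↔ Wadj (π a) (π b)) :
    π ∈ preservedSubgroup (polygonB n) (polygonW n) := by
  refine ⟨fun p => ?_, fun p => ?_⟩
  · induction p using Sym2.ind with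
    | _ a b =>
      rw [Sym2.map_pair_eq, memB_iff n hn, memB_iff n hn]
      exact hB a b
  · induction p using Sym2.ind with
    | _ a b =>
      rw [Sym2.map_pair_eq, memW_iff n hn, memW_iff n hn]
      exact hW a b

lemma mem_f (n : ℕ) (hn : 1 ≤ n) [NeZero (2 * n)] (c : Fin (2 * n)) :
    f c ∈ preservedSubgroup (polygonB n) (polygonW n) := by
  have hd : 2 ∣ 2 * n := ⟨n, rfl⟩
  have h2 : 2 ≤ 2 * n := by omega
  have hone : ∀ x : ZMod 2, ¬ x = 0 → x = 1 := by decide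
  apply mem_preserved n hn
  · intro a b
    unfold f
    split_ifs with hc
    · simp only [Equiv.coe_addRight]
      constructor
      · exact Badj_shift hd hc
      · intro h
        have hc' : par (-c) = 0 := by rw [par_neg hd, hc]
        have := Badj_shift hd hc' h
        simpa using this
    · have hc1 := hone _ hc
      simp only [Equiv.subLeft_apply]
      constructor
      · exact Badj_reflect hd h2 hc1
      · intro h
        have := Badj_reflect hd h2 hc1 h
        simpa using this
  · intro a b
    unfold f
    split_ifs with hc
    · simp only [Equiv.coe_addRight]
      constructor
      · exact Wadj_shift hd hc
      · intro h
        have hc' : par (-c) = 0 := by rw [par_neg hd, hc]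
        have := Wadj_shift hd hc' h
        simpa using this
    · have hc1 := hone _ hc
      simp only [Equiv.subLeft_apply]
      constructor
      · exact Wadj_reflect hd h2 hc1
      · intro h
        have := Wadj_reflect hd h2 hc1 h
        simpa using this

lemma key (n : ℕ) (hn : 1 ≤ n) [NeZero (2 * n)] (π : Equiv.Perm (Fin (2 * n)))
    (hπ : π ∈ preservedSubgroup (polygonB n) (polygonW n)) : π = f (π 0) := by
  have hd : 2 ∣ 2 * n := ⟨n, rfl⟩
  have h2 : 2 ≤ 2 * n := by omega
  obtain ⟨hB, hW⟩ := hπ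
  have hB' : ∀ a b : Fin (2 * n), Badj a b → Badj (π a) (π b) := by
    intro a b h
    have := (hB s(a, b)).mp ((memB_iff n hn a b).mpr h)
    rw [Sym2.map_pair_eq] at this
    exact (memB_iff n hn _ _).mp this
  have hW' : ∀ a b : Fin (2 * n), Wadj a b → Wadj (π a) (π b) := by
    intro a b h
    have := (hW s(a, b)).mp ((memW_iff n hn a b).mpr h)
    rw [Sym2.map_pair_eq] at this
    exact (memW_iff n hn _ _).mp this
  rcases zmod2_cases (par (π 0)) with hc | hc
  · have main : ∀ m : ℕ, π ((m : Fin (2 * n))) = (m : Fin (2 * n)) + π 0 := by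
      intro m
      induction m with
      | zero => simp
      | succ m ih =>
        have hpa : par (π (m : Fin (2 * n))) = (m : ZMod 2) := by
          rw [ih, par_add hd, hc, par_natCast hd]; ring
        have hcast : ((m + 1 : ℕ) : Fin (2 * n)) = (m : Fin (2 * n)) + 1 := by
          push_cast; ring
        rw [hcast]
        rcases zmod2_cases ((m : ZMod 2)) with hm | hm
        · have hedge : Badj (m : Fin (2 * n)) ((m : Fin (2 * n)) + 1) :=
            Or.inl ⟨by rw [par_natCast hd, hm], rfl⟩
          have h := hB' _ _ hedge
          have h3 := Badj_fst_zero hd h2 (by rw [hpa, hm]) h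
          rw [h3, ih]; ring
        · have hedge : Wadj (m : Fin (2 * n)) ((m : Fin (2 * n)) + 1) :=
            Or.inl ⟨by rw [par_natCast hd, hm], rfl⟩
          have h := hW' _ _ hedge
          have h3 := Wadj_fst_one hd h2 (by rw [hpa, hm]) h
          rw [h3, ih]; ring
    ext x
    have hx := main x.val
    rw [Fin.cast_val_eq_self] at hx
    rw [hx]
    unfold f
    rw [if_pos hc]
    simp
  · have main : ∀ m : ℕ, π ((m : Fin (2 * n))) = π 0 - (m : Fin (2 * n)) := by
      intro m
      induction m with
      | zero => simp
      | succ m ih =>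
        have hpa : par (π (m : Fin (2 * n))) = 1 + (m : ZMod 2) := by
          rw [ih, par_sub hd, hc, par_natCast hd]
        have hcast : ((m + 1 : ℕ) : Fin (2 * n)) = (m : Fin (2 * n)) + 1 := by
          push_cast; ring
        rw [hcast]
        rcases zmod2_cases ((m : ZMod 2)) with hm | hm
        · have hedge : Badj (m : Fin (2 * n)) ((m : Fin (2 * n)) + 1) :=
            Or.inl ⟨by rw [par_natCast hd, hm], rfl⟩
          have h := hB' _ _ hedge
          have h3 := Badj_fst_one (by rw [hpa, hm]; ring) h
          rw [h3, ih]; ring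
        · have hedge : Wadj (m : Fin (2 * n)) ((m : Fin (2 * n)) + 1) :=
            Or.inl ⟨by rw [par_natCast hd, hm], rfl⟩
          have h := hW' _ _ hedge
          have h3 := Wadj_fst_zero (by rw [hpa, hm]; decide) h
          rw [h3, ih]; ring
    ext x
    have hx := main x.val
    rw [Fin.cast_val_eq_self] at hx
    rw [hx]
    unfold f
    rw [if_neg (by rw [hc]; decide)]
    simp

end PGAux

/-- The subgroup of the symmetric group on the `2n` edge-sides consisting of the
permutations preserving both corner pairings `B` and `W` of the bicolored
`2n`-gon has exactly `2n` elements. -/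
theorem preserving_group_card (n : ℕ) (hn : 1 ≤ n) :
    Nat.card (preservedSubgroup (polygonB n) (polygonW n)) = 2 * n := by
  haveI : NeZero (2 * n) := ⟨by omega⟩
  have hbij : Function.Bijective (fun c : Fin (2 * n) =>
      (⟨PGAux.f c, PGAux.mem_f n hn c⟩ : preservedSubgroup (polygonB n) (polygonW n))) := by
    constructor
    · intro a b hab
      have h1 : PGAux.f a = PGAux.f b := congrArg Subtype.val hab
      have h0 : PGAux.f a 0 = PGAux.f b 0 := by rw [h1]
      rwa [PGAux.f_zero, PGAux.f_zero] at h0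
    · rintro ⟨π, hπ⟩
      exact ⟨π 0, Subtype.ext (PGAux.key n hn π hπ).symm⟩
  rw [← Nat.card_eq_of_bijective _ hbij, Nat.card_eq_fintype_card, Fintype.card_fin]

end
end

section
/- The number of pairs (σ₁, σ₂) of permutations of {1,...,n} such that the subgroup generated by σ₁ and σ₂ acts transitively on {1,...,n}, multiplied by (2n)!, equals 2·n! times the number of connected orientable non-oriented maps (B,W,E) on the label set {1,...,2n}, where B, W, E are pair-partitions of {1,...,2n}. -/
open Classical

noncomputable section

variable {α : Type*} {β : Type*}

/-- `P` is a pair-partition (perfect matching) of the set `X`: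
every block is a non-diagonal unordered pair contained in `X`,
and every element of `X` belongs to exactly one block. -/
def IsPairPartitionOn (X : Set α) (P : Set (Sym2 α)) : Prop :=
  (∀ p ∈ P, ¬ p.IsDiag ∧ ∀ x ∈ p, x ∈ X) ∧ ∀ x ∈ X, ∃! p, p ∈ P ∧ x ∈ p

/-- A (non-oriented) map encoded as a triple of pair-partitions of the set `X` of
edge-sides: `B` (corners at black vertices), `W` (corners at white vertices),
`E` (gluings of edge-sides into edges). -/
structure PMap (α : Type*) where
  X : Set α
  B : Set (Sym2 α)
  W : Set (Sym2 α)
  E : Set (Sym2 α)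

def PMap.IsMap (M : PMap α) : Prop :=
  IsPairPartitionOn M.X M.B ∧ IsPairPartitionOn M.X M.W ∧ IsPairPartitionOn M.X M.E

/-- two edge-sides are adjacent w.r.t. a collection of pairs -/
def pairAdj (S : Set (Sym2 α)) (x y : α) : Prop := ∃ p ∈ S, x ∈ p ∧ y ∈ p

def reach (S : Set (Sym2 α)) : α → α → Prop := Relation.ReflTransGen (pairAdj S)

def classesOf (M : PMap α) (S : Set (Sym2 α)) : Set (Set α) :=
  {C | ∃ x ∈ M.X, C = {y | reach S x y}}

/-- the faces of a map: connected components of edge-sides under `B ∪ W` (polygons) -/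
def PMap.faces (M : PMap α) : Set (Set α) := classesOf M (M.B ∪ M.W)
def PMap.components (M : PMap α) : Set (Set α) := classesOf M (M.B ∪ M.W ∪ M.E)
def PMap.blackVertices (M : PMap α) : Set (Set α) := classesOf M (M.B ∪ M.E)
def PMap.whiteVertices (M : PMap α) : Set (Set α) := classesOf M (M.W ∪ M.E)

def PMap.numFaces (M : PMap α) : ℕ := M.faces.ncard
def PMap.numComponents (M : PMap α) : ℕ := M.components.ncard
def PMap.numVertices (M : PMap α) : ℕ := M.blackVertices.ncard + M.whiteVertices.ncard

/-- top-degree map: each connected component is one of the faces -/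
def PMap.TopDegree (M : PMap α) : Prop := ∀ C ∈ M.components, C ∈ M.faces

/-- the number of faces equals the number of connected components -/
def PMap.Balanced (M : PMap α) : Prop := M.numFaces = M.numComponents

def PMap.Connected (M : PMap α) : Prop :=
  ∀ x ∈ M.X, ∀ y ∈ M.X, reach (M.B ∪ M.W ∪ M.E) x y

/-- orientability: the edge-sides can be 2-colored (oriented) so that any two
distinct edge-sides sharing a corner or glued together get opposite colors -/
def PMap.Orientable (M : PMap α) : Prop :=
  ∃ s : α → Bool, ∀ p ∈ M.B ∪ M.W ∪ M.E, ∀ x ∈ p, ∀ y ∈ p, x ≠ y → s x ≠ s y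

/-- a coloring of edge-sides alternating along the boundary of every face -/
def AltColoring (M : PMap α) (s : α → Bool) : Prop :=
  ∀ p ∈ M.B ∪ M.W, ∀ x ∈ p, ∀ y ∈ p, x ≠ y → s x ≠ s y

/-- straight edge: both sides on the same face, traversed in opposite directions -/
def PMap.Straight (M : PMap α) (e : Sym2 α) : Prop :=
  e ∈ M.E ∧ ∀ a b : α, e = s(a, b) →
    reach (M.B ∪ M.W) a b ∧ ∀ s : α → Bool, AltColoring M s → s a ≠ s b

/-- twisted edge: both sides on the same face, traversed in the same direction -/
def PMap.Twisted (M : PMap α) (e : Sym2 α) : Prop :=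
  e ∈ M.E ∧ ∀ a b : α, e = s(a, b) →
    reach (M.B ∪ M.W) a b ∧ ∀ s : α → Bool, AltColoring M s → s a = s b

/-- interface edge: its two sides lie on two different faces -/
def PMap.Interface (M : PMap α) (e : Sym2 α) : Prop :=
  e ∈ M.E ∧ ∀ a b : α, e = s(a, b) → ¬ reach (M.B ∪ M.W) a b

def PMap.IsBridge (M : PMap α) (e : Sym2 α) : Prop :=
  e ∈ M.E ∧ ∀ a b : α, e = s(a, b) → ¬ reach (M.B ∪ M.W ∪ (M.E \ {e})) a b

def PMap.IsLeaf (M : PMap α) (e : Sym2 α) : Prop :=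
  e ∈ M.E ∧ (e ∈ M.B ∨ e ∈ M.W)

/-- removing the two edge-sides of the edge `e` from a pairing: pairs avoiding `e`
are kept, and the two pairs meeting `e` merge into one new pair -/
def removeFrom (P : Set (Sym2 α)) (e : Sym2 α) : Set (Sym2 α) :=
  {p ∈ P | ∀ x ∈ e, x ∉ p} ∪
  {q | ∃ a b x y : α, e = s(a, b) ∧ s(a, x) ∈ P ∧ s(b, y) ∈ P ∧
        x ∉ e ∧ y ∉ e ∧ q = s(x, y)}

/-- the map `M` with the edge `e` removed (isolated vertices disappear) -/
def PMap.remove (M : PMap α) (e : Sym2 α) : PMap α where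
  X := M.X \ {x | x ∈ e}
  B := removeFrom M.B e
  W := removeFrom M.W e
  E := {p ∈ M.E | ∀ x ∈ e, x ∉ p}

def PMap.removeList (M : PMap α) (L : List (Sym2 α)) : PMap α := L.foldl PMap.remove M

/-- a history: a linear order on the edges of `M`, given as a duplicate-free list -/
def PMap.IsHistory (M : PMap α) (L : List (Sym2 α)) : Prop :=
  L.Nodup ∧ ∀ e, e ∈ L ↔ e ∈ M.E

/-- `(M, L)` is a top-degree pair: each stage of the edge removal is a top-degree map -/
def TopDegreePair (M : PMap α) (L : List (Sym2 α)) : Prop :=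
  M.IsHistory L ∧ ∀ i ≤ L.length, (M.removeList (L.take i)).TopDegree

/-- `(M, L)` is balanced: at each stage of the edge removal the number of faces
equals the number of connected components -/
def BalancedPair (M : PMap α) (L : List (Sym2 α)) : Prop :=
  M.IsHistory L ∧ ∀ i ≤ L.length, (M.removeList (L.take i)).Balanced

/-- twisting the edge with sides `a`, `b`: only the white-corner pairing changes,
by exchanging the roles of `a` and `b` -/
def PMap.twist (M : PMap α) (a b : α) : PMap α :=
  { M with W := Sym2.map (Equiv.swap a b) '' M.W }

/-- the weight of an edge: `1` for a straight edge, `γ` for a twisted edge,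
`1/2` for an interface edge -/
def edgeWeight (M : PMap α) (e : Sym2 α) : Polynomial ℚ :=
  if M.Straight e then 1 else if M.Twisted e then Polynomial.X else Polynomial.C (1/2)

/-- the weight `mon_{M,≺}` of a map with a history -/
def monList (M : PMap α) : List (Sym2 α) → Polynomial ℚ
  | [] => 1
  | e :: L => edgeWeight M e * monList (M.remove e) L

def PMap.edgeFinset (M : PMap α) [Fintype α] : Finset (Sym2 α) :=
  (Set.toFinite M.E).toFinset

/-- all histories of `M`, listed as the permutations of a list of its edges -/
def histories (M : PMap α) [Fintype α] : List (List (Sym2 α)) :=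
  M.edgeFinset.toList.permutations

/-- the measure of non-orientability: the average of `mon_{M,≺}` over all histories -/
def mon (M : PMap α) [Fintype α] : Polynomial ℚ :=
  Polynomial.C (1 / (M.edgeFinset.card.factorial : ℚ)) * ((histories M).map (monList M)).sum

/-- the probability that a uniformly random history keeps, at every stage,
the number of faces equal to the number of connected components -/
def montop (M : PMap α) [Fintype α] : ℚ :=
  (((histories M).filter (fun L => decide (BalancedPair M L))).length : ℚ) /
    (M.edgeFinset.card.factorial : ℚ)

/-- an edge is incident to a vertex (a class of edge-sides) -/
def Incident (e : Sym2 α) (C : Set α) : Prop := ∃ x ∈ e, x ∈ C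

/-- isomorphism of the underlying bicolored (multi)graphs of two maps -/
def GraphIso (M : PMap α) (M' : PMap β) : Prop :=
  ∃ (fb fw : Set α → Set β) (fe : Sym2 α → Sym2 β),
    Set.BijOn fb M.blackVertices M'.blackVertices ∧
    Set.BijOn fw M.whiteVertices M'.whiteVertices ∧
    Set.BijOn fe M.E M'.E ∧
    (∀ e ∈ M.E, ∀ C ∈ M.blackVertices, (Incident e C ↔ Incident (fe e) (fb C))) ∧
    (∀ e ∈ M.E, ∀ C ∈ M.whiteVertices, (Incident e C ↔ Incident (fe e) (fw C)))

/-- relabelling the edge-sides of a map by a permutation -/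
def PMap.relabel (π : Equiv.Perm α) (M : PMap α) : PMap α where
  X := π '' M.X
  B := Sym2.map π '' M.B
  W := Sym2.map π '' M.W
  E := Sym2.map π '' M.E

/-- two labelled maps give the same unlabelled map -/
def SameUnlabeled (M M' : PMap α) : Prop := ∃ π : Equiv.Perm α, M' = M.relabel π

/-- `L(B,W)` consists of a single polygon, i.e. the map has exactly one face -/
def OnePolygon (M : PMap α) : Prop := ∀ x ∈ M.X, ∀ y ∈ M.X, reach (M.B ∪ M.W) x y

/-- the subgroup generated by `σ₁, σ₂` acts transitively -/
def TransitivePair {n : ℕ} (σ₁ σ₂ : Equiv.Perm (Fin n)) : Prop :=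
  ∀ x y : Fin n, ∃ g ∈ Subgroup.closure ({σ₁, σ₂} : Set (Equiv.Perm (Fin n))), g x = y

/-- the non-oriented map associated to an oriented map `M(σ₁,σ₂)` and a bijection
`f` labelling the edge-sides -/
def toPMapF {n : ℕ} (f : Fin n × Fin 2 ≃ β) (σ₁ σ₂ : Equiv.Perm (Fin n)) : PMap β where
  X := Set.univ
  B := {p | ∃ k : Fin n, p = s(f (k, 0), f (σ₂ k, 1))}
  W := {p | ∃ k : Fin n, p = s(f (k, 1), f (σ₁ k, 0))}
  E := {p | ∃ k : Fin n, p = s(f (k, 0), f (k, 1))}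

/-- the number of cycles (orbits, including fixed points) of a permutation -/
def cycleCount {γ : Type*} (σ : Equiv.Perm γ) : ℕ :=
  Set.ncard {O : Set γ | ∃ x : γ, O = {y | ∃ k : ℤ, (σ ^ k) x = y}}

/-! ### Auxiliary material for Proposition 3.2 -/

section EdgeLiberationAux

/-- the partner of `x` in a pairing `P` -/
noncomputable def pfn (P : Set (Sym2 α)) (x : α) : α :=
  if h : ∃ y, s(x, y) ∈ P then h.choose else x

lemma pfn_mem {P : Set (Sym2 α)} {x : α} (h : ∃ y, s(x, y) ∈ P) : s(x, pfn P x) ∈ P := by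
  rw [pfn, dif_pos h]; exact h.choose_spec

lemma pfn_spec {P : Set (Sym2 α)} (hP : IsPairPartitionOn Set.univ P) (x : α) :
    s(x, pfn P x) ∈ P ∧ pfn P x ≠ x := by
  obtain ⟨p, ⟨hpP, hxp⟩, -⟩ := hP.2 x (Set.mem_univ x)
  induction p using Sym2.ind with
  | _ a b =>
    rw [Sym2.mem_iff] at hxp
    have hex : ∃ y, s(x, y) ∈ P := by
      rcases hxp with rfl | rfl
      · exact ⟨b, hpP⟩
      · exact ⟨a, by rwa [Sym2.eq_swap]⟩
    have h1 : s(x, pfn P x) ∈ P := pfn_mem hex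
    refine ⟨h1, ?_⟩
    have hnd := (hP.1 _ h1).1
    rw [Sym2.mk_isDiag_iff] at hnd
    exact fun hEq => hnd hEq.symm

lemma pfn_unique {P : Set (Sym2 α)} (hP : IsPairPartitionOn Set.univ P) {x y : α}
    (h : s(x, y) ∈ P) : pfn P x = y := by
  have h1 : s(x, pfn P x) ∈ P := pfn_mem ⟨y, h⟩
  obtain ⟨p, -, hu⟩ := hP.2 x (Set.mem_univ x)
  have e1 := hu _ ⟨h1, by simp⟩
  have e2 := hu _ ⟨h, by simp⟩
  exact Sym2.congr_right.mp (e1.trans e2.symm)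

lemma pfn_invol {P : Set (Sym2 α)} (hP : IsPairPartitionOn Set.univ P) (x : α) :
    pfn P (pfn P x) = x :=
  pfn_unique hP (by rw [Sym2.eq_swap]; exact (pfn_spec hP x).1)

lemma pfn_eq_of_mem {P : Set (Sym2 α)} (hP : IsPairPartitionOn Set.univ P) {p : Sym2 α}
    (hp : p ∈ P) {x : α} (hx : x ∈ p) : p = s(x, pfn P x) := by
  induction p using Sym2.ind with
  | _ a b =>
    rw [Sym2.mem_iff] at hx
    rcases hx with rfl | rfl
    · rw [pfn_unique hP hp]
    · rw [pfn_unique hP (show s(x, a) ∈ P by rwa [Sym2.eq_swap])]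
      exact Sym2.eq_swap

lemma fin_two' (i : Fin 2) : i = 0 ∨ i = 1 := by
  fin_cases i
  · exact Or.inl rfl
  · exact Or.inr rfl

lemma isPairPartitionOn_range {n : ℕ} (u v : Fin n → α)
    (huv : ∀ k j, u k ≠ v j) (hu : Function.Injective u) (hv : Function.Injective v)
    (hcov : ∀ x : α, (∃ k, x = u k) ∨ (∃ k, x = v k)) :
    IsPairPartitionOn Set.univ {p : Sym2 α | ∃ k, p = s(u k, v k)} := by
  constructor
  · rintro p ⟨k, rfl⟩
    exact ⟨by simp [Sym2.mk_isDiag_iff, huv k k], fun x _ => Set.mem_univ x⟩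
  · intro x _
    rcases hcov x with ⟨k, rfl⟩ | ⟨k, rfl⟩
    · refine ⟨s(u k, v k), ⟨⟨k, rfl⟩, by simp⟩, ?_⟩
      rintro q ⟨⟨j, rfl⟩, hm⟩
      rw [Sym2.mem_iff] at hm
      rcases hm with h | h
      · cases hu h; rfl
      · exact absurd h (huv k j)
    · refine ⟨s(u k, v k), ⟨⟨k, rfl⟩, by simp⟩, ?_⟩
      rintro q ⟨⟨j, rfl⟩, hm⟩
      rw [Sym2.mem_iff] at hm
      rcases hm with h | h
      · exact absurd h.symm (huv j k)
      · cases hv h; rfl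

lemma PMap.ext' {M M' : PMap α} (h1 : M.X = M'.X) (h2 : M.B = M'.B)
    (h3 : M.W = M'.W) (h4 : M.E = M'.E) : M = M' := by
  cases M; cases M'; cases h1; cases h2; cases h3; cases h4; rfl

instance PMap.finite [Finite α] : Finite (PMap α) := by
  have : Function.Injective (fun M : PMap α => (M.X, M.B, M.W, M.E)) := by
    rintro ⟨x1, b1, w1, e1⟩ ⟨x2, b2, w2, e2⟩ h
    simp only [Prod.mk.injEq] at h
    obtain ⟨rfl, rfl, rfl, rfl⟩ := h
    rfl
  exact Finite.of_injective _ this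

end EdgeLiberationAux
section ToPMapFLemmas

variable {n : ℕ} (f : Fin n × Fin 2 ≃ β) (σ₁ σ₂ : Equiv.Perm (Fin n))

lemma f_ne01 : ∀ k j : Fin n, f (k, 0) ≠ f (j, 1) := fun k j h => by
  have h2 : (0 : Fin 2) = 1 := congrArg Prod.snd (f.injective h)
  exact absurd h2 (by decide)

lemma f_inj0 : Function.Injective (fun k : Fin n => f (k, 0)) := fun a b h =>
  congrArg Prod.fst (f.injective h)

lemma f_inj1 : Function.Injective (fun k : Fin n => f (k, 1)) := fun a b h =>
  congrArg Prod.fst (f.injective h)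

lemma f_cov : ∀ x : β, (∃ k, x = f (k, 0)) ∨ (∃ k, x = f (k, 1)) := by
  intro x
  obtain ⟨⟨k, i⟩, rfl⟩ : ∃ y, f y = x := ⟨f.symm x, by simp⟩
  rcases fin_two' i with rfl | rfl
  · exact Or.inl ⟨k, rfl⟩
  · exact Or.inr ⟨k, rfl⟩

lemma toPMapF_isMap : (toPMapF f σ₁ σ₂).IsMap := by
  refine ⟨?_, ?_, ?_⟩
  · exact isPairPartitionOn_range (fun k => f (k, 0)) (fun k => f (σ₂ k, 1))
      (fun k j => f_ne01 f k (σ₂ j)) (f_inj0 f)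
      (fun a b h => σ₂.injective (f_inj1 f h))
      (fun x => (f_cov f x).imp id (fun ⟨k, hk⟩ => ⟨σ₂⁻¹ k, by simp [hk]⟩))
  · exact isPairPartitionOn_range (fun k => f (k, 1)) (fun k => f (σ₁ k, 0))
      (fun k j h => f_ne01 f (σ₁ j) k h.symm) (f_inj1 f)
      (fun a b h => σ₁.injective (f_inj0 f h))
      (fun x => ((f_cov f x).imp (fun ⟨k, hk⟩ => ⟨σ₁⁻¹ k, by simp [hk]⟩) id).symm)
  · exact isPairPartitionOn_range (fun k => f (k, 0)) (fun k => f (k, 1))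
      (f_ne01 f) (f_inj0 f) (f_inj1 f) (f_cov f)

/-- the canonical proper colouring coming from an edge-side labelling -/
def cOf : β → Bool := fun x => decide ((f.symm x).2 = 1)

lemma cOf_proper : ∀ p ∈ (toPMapF f σ₁ σ₂).B ∪ (toPMapF f σ₁ σ₂).W ∪ (toPMapF f σ₁ σ₂).E,
    ∀ x ∈ p, ∀ y ∈ p, x ≠ y → cOf f x ≠ cOf f y := by
  rintro p hp x hx y hy hxy
  rcases hp with (⟨k, rfl⟩ | ⟨k, rfl⟩) | ⟨k, rfl⟩ <;>
    rcases Sym2.mem_iff.mp hx with rfl | rfl <;>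
    rcases Sym2.mem_iff.mp hy with rfl | rfl <;>
    first
      | exact absurd rfl hxy
      | simp [cOf]

lemma toPMapF_orientable : (toPMapF f σ₁ σ₂).Orientable :=
  ⟨cOf f, cOf_proper f σ₁ σ₂⟩

lemma pairAdj_symm {S : Set (Sym2 β)} : Symmetric (pairAdj S) :=
  fun _ _ ⟨p, hp, h1, h2⟩ => ⟨p, hp, h2, h1⟩

lemma reach_symm {S : Set (Sym2 β)} : Symmetric (reach S) :=
  by
    haveI : Std.Symm (pairAdj S) := ⟨fun a b h => pairAdj_symm h⟩
    exact fun a b (h : Relation.ReflTransGen (pairAdj S) a b) =>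
      (Std.Symm.symm a b h : Relation.ReflTransGen (pairAdj S) b a)

lemma toPMapF_connected (h : TransitivePair σ₁ σ₂) : (toPMapF f σ₁ σ₂).Connected := by
  set M := toPMapF f σ₁ σ₂ with hM
  set S := M.B ∪ M.W ∪ M.E with hS
  have adjE : ∀ k, pairAdj S (f (k, 0)) (f (k, 1)) :=
    fun k => ⟨s(f (k, 0), f (k, 1)), Or.inr ⟨k, rfl⟩, by simp, by simp⟩
  have adjB : ∀ k, pairAdj S (f (k, 0)) (f (σ₂ k, 1)) :=
    fun k => ⟨s(f (k, 0), f (σ₂ k, 1)), Or.inl (Or.inl ⟨k, rfl⟩), by simp, by simp⟩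
  have adjW : ∀ k, pairAdj S (f (k, 1)) (f (σ₁ k, 0)) :=
    fun k => ⟨s(f (k, 1), f (σ₁ k, 0)), Or.inl (Or.inr ⟨k, rfl⟩), by simp, by simp⟩
  have key : ∀ g ∈ Subgroup.closure ({σ₁, σ₂} : Set (Equiv.Perm (Fin n))), ∀ k,
      reach S (f (k, 0)) (f (g k, 0)) := by
    intro g hg
    induction hg using Subgroup.closure_induction with
    | mem x hx =>
      rcases hx with rfl | rfl
      · exact fun k => (Relation.ReflTransGen.single (adjE k)).tail (adjW k)
      · exact fun k => (Relation.ReflTransGen.single (adjB k)).tail (pairAdj_symm (adjE (x k)))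
    | one => intro k; simp only [Equiv.Perm.one_apply]; exact Relation.ReflTransGen.refl
    | mul x y hx hy px py =>
      intro k
      have := (py k).trans (px (y k))
      rw [Equiv.Perm.mul_apply]; exact this
    | inv x hx px =>
      intro k
      have := px (x⁻¹ k)
      simp only [show x (x⁻¹ k) = k from x.apply_symm_apply k] at this
      exact reach_symm this
  have side : ∀ (k : Fin n) (i : Fin 2), reach S (f (k, i)) (f (k, 0)) := by
    intro k i
    rcases fin_two' i with rfl | rfl
    · exact Relation.ReflTransGen.refl
    · exact reach_symm (Relation.ReflTransGen.single (adjE k))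
  intro x _ y _
  obtain ⟨⟨kx, ix⟩, rfl⟩ : ∃ a, f a = x := ⟨f.symm x, by simp⟩
  obtain ⟨⟨ky, iy⟩, rfl⟩ : ∃ a, f a = y := ⟨f.symm y, by simp⟩
  obtain ⟨g, hg, hgk⟩ := h kx ky
  exact ((side kx ix).trans (hgk ▸ key g hg kx)).trans (reach_symm (side ky iy))

lemma transitive_of_connected (hc : (toPMapF f σ₁ σ₂).Connected) : TransitivePair σ₁ σ₂ := by
  set M := toPMapF f σ₁ σ₂ with hM
  set S := M.B ∪ M.W ∪ M.E with hS
  have step : ∀ x y : β, pairAdj S x y →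
      ∃ g ∈ Subgroup.closure ({σ₁, σ₂} : Set (Equiv.Perm (Fin n))),
        g ((f.symm x).1) = (f.symm y).1 := by
    rintro x y ⟨p, hp, hx, hy⟩
    rcases hp with (⟨k, rfl⟩ | ⟨k, rfl⟩) | ⟨k, rfl⟩ <;>
      rcases Sym2.mem_iff.mp hx with rfl | rfl <;>
      rcases Sym2.mem_iff.mp hy with rfl | rfl <;>
      first
        | (refine ⟨1, one_mem _, ?_⟩; simp; done)
        | (refine ⟨σ₂, Subgroup.subset_closure (by simp), ?_⟩; simp; done)
        | (refine ⟨σ₂⁻¹, inv_mem (Subgroup.subset_closure (by simp)), ?_⟩; simp; done)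
        | (refine ⟨σ₁, Subgroup.subset_closure (by simp), ?_⟩; simp; done)
        | (refine ⟨σ₁⁻¹, inv_mem (Subgroup.subset_closure (by simp)), ?_⟩; simp; done)
  have key : ∀ x y : β, reach S x y →
      ∃ g ∈ Subgroup.closure ({σ₁, σ₂} : Set (Equiv.Perm (Fin n))),
        g ((f.symm x).1) = (f.symm y).1 := by
    intro x y h
    induction h with
    | refl => exact ⟨1, one_mem _, rfl⟩
    | tail hab hbc ih =>
      obtain ⟨g, hg, hgk⟩ := ih
      obtain ⟨g', hg', hgk'⟩ := step _ _ hbc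
      exact ⟨g' * g, mul_mem hg' hg, by rw [Equiv.Perm.mul_apply, hgk, hgk']⟩
  intro x y
  obtain ⟨g, hg, hgk⟩ := key (f (x, 0)) (f (y, 0)) (hc _ trivial _ trivial)
  exact ⟨g, hg, by simpa using hgk⟩

end ToPMapFLemmas
section FiberConstruction

/-- properness of a colouring (the condition in `PMap.Orientable`) -/
def Proper (M : PMap α) (c : α → Bool) : Prop :=
  ∀ p ∈ M.B ∪ M.W ∪ M.E, ∀ x ∈ p, ∀ y ∈ p, x ≠ y → c x ≠ c y

lemma proper_flip {M : PMap α} {P : Set (Sym2 α)} (hP : IsPairPartitionOn Set.univ P)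
    (hsub : P ⊆ M.B ∪ M.W ∪ M.E) {c : α → Bool} (hc : Proper M c) (x : α) :
    c (pfn P x) = ! c x := by
  have h1 := pfn_spec hP x
  have h2 := hc _ (hsub h1.1) x (by simp) _ (by simp) (Ne.symm h1.2)
  revert h2
  cases c x <;> cases c (pfn P x) <;> simp

lemma invol_inj {F : α → α} (h : ∀ x, F (F x) = x) : Function.Injective F :=
  fun a b hab => by rw [← h a, hab, h]

variable {n : ℕ} (c : Fin (2 * n) → Bool) (g : Fin n ≃ {x : Fin (2 * n) // c x = true})
  (pE : Fin (2 * n) → Fin (2 * n))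

def cF0 : Fin n × Fin 2 → Fin (2 * n) := fun q => if q.2 = 0 then pE ↑(g q.1) else ↑(g q.1)

lemma cF0_zero (k : Fin n) : cF0 c g pE (k, 0) = pE ↑(g k) := if_pos rfl

lemma cF0_one (k : Fin n) : cF0 c g pE (k, 1) = ↑(g k) := by
  have h : ((1 : Fin 2) = 0) = False := by simp
  unfold cF0
  simp only [h]
  exact if_neg not_false

lemma cF0_bij (hinv : ∀ x, pE (pE x) = x) (hflip : ∀ x, c (pE x) = ! c x) :
    Function.Bijective (cF0 c g pE) := by
  constructor
  · rintro ⟨k, i⟩ ⟨j, i'⟩ h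
    rcases fin_two' i with rfl | rfl <;> rcases fin_two' i' with rfl | rfl <;>
      simp only [cF0_zero, cF0_one] at h
    · have h2 : (g k : Fin (2 * n)) = ↑(g j) := invol_inj hinv h
      cases g.injective (Subtype.ext h2); rfl
    · exfalso
      have := congrArg c h
      rw [hflip, (g k).2, (g j).2] at this
      simp at this
    · exfalso
      have := congrArg c h
      rw [hflip, (g k).2, (g j).2] at this
      simp at this
    · cases g.injective (Subtype.ext h); rfl
  · intro x
    rcases Bool.eq_false_or_eq_true (c x) with hcx | hcx
    · exact ⟨(g.symm ⟨x, hcx⟩, 1), by rw [cF0_one, g.apply_symm_apply]⟩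
    · refine ⟨(g.symm ⟨pE x, by rw [hflip, hcx]; rfl⟩, 0), ?_⟩
      rw [cF0_zero, g.apply_symm_apply, hinv]

noncomputable def cPerm (F : Fin (2 * n) → Fin (2 * n))
    (htrue : ∀ x, c x = true → c (F x) = true) (hinj : Function.Injective F) :
    Equiv.Perm (Fin n) :=
  Equiv.ofBijective (fun k => g.symm ⟨F ↑(g k), htrue _ (g k).2⟩)
    (Finite.injective_iff_bijective.mp (fun a b h => by
      have h2 := Subtype.ext_iff.mp (g.symm.injective h)
      exact g.injective (Subtype.ext (hinj h2))))

lemma cPerm_apply (F : Fin (2 * n) → Fin (2 * n))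
    (htrue : ∀ x, c x = true → c (F x) = true) (hinj : Function.Injective F) (k : Fin n) :
    ↑(g (cPerm c g F htrue hinj k)) = F ↑(g k) := by
  simp [cPerm]

end FiberConstruction

section FiberCard

variable {n : ℕ} {M : PMap (Fin (2 * n))}

/-- the type of fibre elements over `M` -/
abbrev FibT (n : ℕ) (M : PMap (Fin (2 * n))) :=
  {a : (Fin n × Fin 2 ≃ Fin (2 * n)) ×
      {p : Equiv.Perm (Fin n) × Equiv.Perm (Fin n) // TransitivePair p.1 p.2} //
    toPMapF a.1 a.2.1.1 a.2.1.2 = M}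

/-- colourings together with a labelling of the positively oriented sides -/
abbrev SigT (n : ℕ) (M : PMap (Fin (2 * n))) :=
  Σ cc : {c : Fin (2 * n) → Bool // Proper M c}, (Fin n ≃ {x : Fin (2 * n) // cc.1 x = true})

variable (hB : IsPairPartitionOn Set.univ M.B) (hW : IsPairPartitionOn Set.univ M.W)
  (hE : IsPairPartitionOn Set.univ M.E)

lemma subB : M.B ⊆ M.B ∪ M.W ∪ M.E := fun p hp => Or.inl (Or.inl hp)
lemma subW : M.W ⊆ M.B ∪ M.W ∪ M.E := fun p hp => Or.inl (Or.inr hp)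
lemma subE : M.E ⊆ M.B ∪ M.W ∪ M.E := fun p hp => Or.inr hp

noncomputable def buildf {c : Fin (2 * n) → Bool} (hc : Proper M c)
    (g : Fin n ≃ {x : Fin (2 * n) // c x = true}) : Fin n × Fin 2 ≃ Fin (2 * n) :=
  Equiv.ofBijective (cF0 c g (pfn M.E))
    (cF0_bij c g (pfn M.E) (pfn_invol hE) (fun x => proper_flip hE subE hc x))

lemma buildf_zero {c : Fin (2 * n) → Bool} (hc : Proper M c)
    (g : Fin n ≃ {x : Fin (2 * n) // c x = true}) (k : Fin n) :
    buildf hE hc g (k, 0) = pfn M.E ↑(g k) := cF0_zero c g (pfn M.E) k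

lemma buildf_one {c : Fin (2 * n) → Bool} (hc : Proper M c)
    (g : Fin n ≃ {x : Fin (2 * n) // c x = true}) (k : Fin n) :
    buildf hE hc g (k, 1) = ↑(g k) := cF0_one c g (pfn M.E) k

noncomputable def buildσ₂ {c : Fin (2 * n) → Bool} (hc : Proper M c)
    (g : Fin n ≃ {x : Fin (2 * n) // c x = true}) : Equiv.Perm (Fin n) :=
  cPerm c g (fun x => pfn M.B (pfn M.E x))
    (fun x hx => by rw [proper_flip hB subB hc, proper_flip hE subE hc, hx]; rfl)
    ((invol_inj (pfn_invol hB)).comp (invol_inj (pfn_invol hE)))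

lemma buildσ₂_apply {c : Fin (2 * n) → Bool} (hc : Proper M c)
    (g : Fin n ≃ {x : Fin (2 * n) // c x = true}) (k : Fin n) :
    ↑(g (buildσ₂ hB hE hc g k)) = pfn M.B (pfn M.E ↑(g k)) := cPerm_apply _ _ _ _ _ _

noncomputable def buildσ₁ {c : Fin (2 * n) → Bool} (hc : Proper M c)
    (g : Fin n ≃ {x : Fin (2 * n) // c x = true}) : Equiv.Perm (Fin n) :=
  cPerm c g (fun x => pfn M.E (pfn M.W x))
    (fun x hx => by rw [proper_flip hE subE hc, proper_flip hW subW hc, hx]; rfl)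
    ((invol_inj (pfn_invol hE)).comp (invol_inj (pfn_invol hW)))

lemma buildσ₁_apply {c : Fin (2 * n) → Bool} (hc : Proper M c)
    (g : Fin n ≃ {x : Fin (2 * n) // c x = true}) (k : Fin n) :
    ↑(g (buildσ₁ hW hE hc g k)) = pfn M.E (pfn M.W ↑(g k)) := cPerm_apply _ _ _ _ _ _

lemma build_toPMapF (hX : M.X = Set.univ) {c : Fin (2 * n) → Bool} (hc : Proper M c)
    (g : Fin n ≃ {x : Fin (2 * n) // c x = true}) :
    toPMapF (buildf hE hc g) (buildσ₁ hW hE hc g) (buildσ₂ hB hE hc g) = M := by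
  have flipE := fun x => proper_flip hE subE hc x
  have flipB := fun x => proper_flip hB subB hc x
  have flipW := fun x => proper_flip hW subW hc x
  apply PMap.ext'
  · exact hX.symm
  · -- B
    ext p
    constructor
    · rintro ⟨k, rfl⟩
      rw [buildf_zero, buildf_one, buildσ₂_apply]
      exact (pfn_spec hB _).1
    · intro hp
      obtain ⟨x, hx, hcx⟩ : ∃ x, x ∈ p ∧ c x = false := by
        induction p using Sym2.ind with
        | _ a b =>
          have hab : a ≠ b := by
            have := (hB.1 _ hp).1; rwa [Sym2.mk_isDiag_iff] at this
          have hcol := hc _ (subB hp) a (by simp) b (by simp) hab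
          rcases Bool.eq_false_or_eq_true (c a) with h | h
          · refine ⟨b, by simp, ?_⟩
            rcases Bool.eq_false_or_eq_true (c b) with h' | h'
            · exact absurd (h.trans h'.symm) hcol
            · exact h'
          · exact ⟨a, by simp, h⟩
      have hpx : c (pfn M.E x) = true := by rw [flipE, hcx]; rfl
      refine ⟨g.symm ⟨pfn M.E x, hpx⟩, ?_⟩
      have h1 : (buildf hE hc g) (g.symm ⟨pfn M.E x, hpx⟩, 0) = x := by
        rw [buildf_zero, g.apply_symm_apply]
        exact pfn_invol hE x
      have h2 : (buildf hE hc g)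
          (buildσ₂ hB hE hc g (g.symm ⟨pfn M.E x, hpx⟩), 1) = pfn M.B x := by
        rw [buildf_one, buildσ₂_apply, g.apply_symm_apply]
        exact congrArg (pfn M.B) (pfn_invol hE x)
      rw [h1, h2]
      exact pfn_eq_of_mem hB hp hx
  · -- W
    ext p
    constructor
    · rintro ⟨k, rfl⟩
      rw [buildf_zero, buildf_one, buildσ₁_apply, pfn_invol hE]
      exact (pfn_spec hW _).1
    · intro hp
      obtain ⟨x, hx, hcx⟩ : ∃ x, x ∈ p ∧ c x = true := by
        induction p using Sym2.ind with
        | _ a b =>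
          have hab : a ≠ b := by
            have := (hW.1 _ hp).1; rwa [Sym2.mk_isDiag_iff] at this
          have hcol := hc _ (subW hp) a (by simp) b (by simp) hab
          rcases Bool.eq_false_or_eq_true (c a) with h | h
          · exact ⟨a, by simp, h⟩
          · refine ⟨b, by simp, ?_⟩
            rcases Bool.eq_false_or_eq_true (c b) with h' | h'
            · exact h'
            · exact absurd (h.trans h'.symm) hcol
      refine ⟨g.symm ⟨x, hcx⟩, ?_⟩
      have h1 : (buildf hE hc g) (g.symm ⟨x, hcx⟩, 1) = x := by
        rw [buildf_one, g.apply_symm_apply]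
      have h2 : (buildf hE hc g)
          (buildσ₁ hW hE hc g (g.symm ⟨x, hcx⟩), 0) = pfn M.W x := by
        rw [buildf_zero, buildσ₁_apply, g.apply_symm_apply]
        exact pfn_invol hE _
      rw [h1, h2]
      exact pfn_eq_of_mem hW hp hx
  · -- E
    ext p
    constructor
    · rintro ⟨k, rfl⟩
      rw [buildf_zero, buildf_one, Sym2.eq_swap]
      exact (pfn_spec hE _).1
    · intro hp
      obtain ⟨x, hx, hcx⟩ : ∃ x, x ∈ p ∧ c x = true := by
        induction p using Sym2.ind with
        | _ a b =>
          have hab : a ≠ b := by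
            have := (hE.1 _ hp).1; rwa [Sym2.mk_isDiag_iff] at this
          have hcol := hc _ (subE hp) a (by simp) b (by simp) hab
          rcases Bool.eq_false_or_eq_true (c a) with h | h
          · exact ⟨a, by simp, h⟩
          · refine ⟨b, by simp, ?_⟩
            rcases Bool.eq_false_or_eq_true (c b) with h' | h'
            · exact h'
            · exact absurd (h.trans h'.symm) hcol
      refine ⟨g.symm ⟨x, hcx⟩, ?_⟩
      have h1 : (buildf hE hc g) (g.symm ⟨x, hcx⟩, 0) = pfn M.E x := by
        rw [buildf_zero, g.apply_symm_apply]
      have h2 : (buildf hE hc g) (g.symm ⟨x, hcx⟩, 1) = x := by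
        rw [buildf_one, g.apply_symm_apply]
      rw [h1, h2, Sym2.eq_swap]
      exact pfn_eq_of_mem hE hp hx

noncomputable def ΘFun (hX : M.X = Set.univ) (hconn : M.Connected) :
    SigT n M → FibT n M := fun t =>
  ⟨⟨buildf hE t.1.2 t.2, ⟨(buildσ₁ hW hE t.1.2 t.2, buildσ₂ hB hE t.1.2 t.2),
      transitive_of_connected _ _ _
        (by rw [build_toPMapF hB hW hE hX t.1.2 t.2]; exact hconn)⟩⟩,
    build_toPMapF hB hW hE hX t.1.2 t.2⟩

lemma ΘFun_inj (hX : M.X = Set.univ) (hconn : M.Connected) :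
    Function.Injective (ΘFun hB hW hE hX hconn) := by
  rintro ⟨⟨ca, hca⟩, ga⟩ ⟨⟨cb, hcb⟩, gb⟩ h
  have hf : buildf hE hca ga = buildf hE hcb gb :=
    congrArg (fun a : FibT n M => a.1.1) h
  have hv1 : ∀ k, (ga k : Fin (2 * n)) = ↑(gb k) := by
    intro k
    have := congrArg (fun e : Fin n × Fin 2 ≃ Fin (2 * n) => e (k, 1)) hf
    simpa only [buildf_one] using this
  have hcc : ca = cb := by
    funext x
    obtain ⟨⟨k, i⟩, rfl⟩ := (buildf hE hca ga).surjective x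
    have ha2 : ca ↑(ga k) = true := (ga k).2
    have hb2 : cb ↑(gb k) = true := (gb k).2
    rcases fin_two' i with rfl | rfl
    · rw [buildf_zero hE hca ga k]
      rw [proper_flip hE subE hca, ha2, hv1 k, proper_flip hE subE hcb, hb2]
    · rw [buildf_one hE hca ga k, ha2, hv1 k, hb2]
  subst hcc
  have hgg : ga = gb := by
    apply Equiv.ext
    intro k
    exact Subtype.ext (hv1 k)
  subst hgg
  rfl

noncomputable def ΨFun : FibT n M → SigT n M := fun t =>
  ⟨⟨cOf t.1.1, by
      intro p hp
      rw [← t.2] at hp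
      exact cOf_proper t.1.1 t.1.2.1.1 t.1.2.1.2 p hp⟩,
    Equiv.ofBijective (fun k => ⟨t.1.1 (k, 1), by simp [cOf]⟩) (by
      constructor
      · intro k j hkj
        exact congrArg Prod.fst (t.1.1.injective (Subtype.ext_iff.mp hkj))
      · rintro ⟨x, hx⟩
        obtain ⟨⟨k, i⟩, rfl⟩ := t.1.1.surjective x
        rcases fin_two' i with rfl | rfl
        · exfalso; simp [cOf] at hx
        · exact ⟨k, rfl⟩)⟩

include hB hW hE in
lemma ΨFun_inj : Function.Injective (ΨFun (n := n) (M := M)) := by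
  rintro ⟨⟨fa, ⟨⟨σa1, σa2⟩, hta⟩⟩, hfa⟩ ⟨⟨fb, ⟨⟨σb1, σb2⟩, htb⟩⟩, hfb⟩ h
  have hval : ∀ k, fa (k, 1) = fb (k, 1) := by
    intro k
    exact congrArg (fun t : SigT n M => ((t.2 k : {x // t.1.1 x = true}) : Fin (2 * n))) h
  have hpE_a : ∀ k, fa (k, 0) = pfn M.E (fa (k, 1)) := by
    intro k
    refine (pfn_unique hE ?_).symm
    rw [← hfa]
    exact ⟨k, Sym2.eq_swap⟩
  have hpE_b : ∀ k, fb (k, 0) = pfn M.E (fb (k, 1)) := by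
    intro k
    refine (pfn_unique hE ?_).symm
    rw [← hfb]
    exact ⟨k, Sym2.eq_swap⟩
  have hff : fa = fb := by
    apply Equiv.ext
    rintro ⟨k, i⟩
    rcases fin_two' i with rfl | rfl
    · rw [hpE_a, hpE_b, hval]
    · exact hval k
  subst hff
  have hσ2 : σa2 = σb2 := by
    apply Equiv.ext
    intro k
    have ha : fa (σa2 k, 1) = pfn M.B (fa (k, 0)) := by
      refine (pfn_unique hB ?_).symm
      rw [← hfa]
      exact ⟨k, rfl⟩
    have hb' : fa (σb2 k, 1) = pfn M.B (fa (k, 0)) := by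
      refine (pfn_unique hB ?_).symm
      rw [← hfb]
      exact ⟨k, rfl⟩
    exact congrArg Prod.fst (fa.injective (ha.trans hb'.symm))
  have hσ1 : σa1 = σb1 := by
    apply Equiv.ext
    intro k
    have ha : fa (σa1 k, 0) = pfn M.W (fa (k, 1)) := by
      refine (pfn_unique hW ?_).symm
      rw [← hfa]
      exact ⟨k, rfl⟩
    have hb' : fa (σb1 k, 0) = pfn M.W (fa (k, 1)) := by
      refine (pfn_unique hW ?_).symm
      rw [← hfb]
      exact ⟨k, rfl⟩
    exact congrArg Prod.fst (fa.injective (ha.trans hb'.symm))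
  subst hσ1
  subst hσ2
  rfl

end FiberCard
section FiberCardCount

variable {n : ℕ} {M : PMap (Fin (2 * n))}

lemma fiber_card (hn : 1 ≤ n) (hM : M.IsMap) (hX : M.X = Set.univ)
    (hconn : M.Connected) (hor : M.Orientable) :
    Nat.card (FibT n M) = 2 * n.factorial := by
  classical
  obtain ⟨hB, hW, hE⟩ := hM
  rw [hX] at hB hW hE
  have hcard : Nat.card (FibT n M) = Nat.card (SigT n M) :=
    le_antisymm (Nat.card_le_card_of_injective _ (ΨFun_inj hB hW hE))
      (Nat.card_le_card_of_injective _ (ΘFun_inj hB hW hE hX hconn))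
  rw [hcard]
  -- there are exactly two proper colourings
  have hC2 : Nat.card {c : Fin (2 * n) → Bool // Proper M c} = 2 := by
    have hx0 : (0 : ℕ) < 2 * n := by omega
    set x₀ : Fin (2 * n) := ⟨0, hx0⟩
    have hbij : Function.Bijective
        (fun cc : {c : Fin (2 * n) → Bool // Proper M c} => cc.1 x₀) := by
      constructor
      · rintro ⟨ca, hca⟩ ⟨cb, hcb⟩ h
        simp only at h
        have main : ∀ y, reach (M.B ∪ M.W ∪ M.E) x₀ y → ca y = cb y := by
          intro y hy
          induction hy with
          | refl => exact h
          | @tail b y' hab hbc ih =>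
            obtain ⟨p, hp, hbp, hyp⟩ := hbc
            by_cases hby : b = y'
            · rwa [← hby]
            · have h1 := hca p hp b hbp y' hyp hby
              have h2 := hcb p hp b hbp y' hyp hby
              have e1 : ca y' = !(ca b) := by
                revert h1; cases ca b <;> cases ca y' <;> simp
              have e2 : cb y' = !(cb b) := by
                revert h2; cases cb b <;> cases cb y' <;> simp
              rw [e1, e2, ih]
        apply Subtype.ext
        funext y
        exact main y (hconn x₀ (by rw [hX]; trivial) y (by rw [hX]; trivial))
      · intro bv
        obtain ⟨c0, hc0⟩ := hor
        have hc0' : Proper M c0 := hc0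
        by_cases hv : c0 x₀ = bv
        · exact ⟨⟨c0, hc0'⟩, hv⟩
        · refine ⟨⟨fun x => !(c0 x), ?_⟩, ?_⟩
          · intro p hp x hx y hy hxy hcon
            exact hc0' p hp x hx y hy hxy (Bool.not_inj hcon)
          · simp only
            revert hv
            cases c0 x₀ <;> cases bv <;> simp
    rw [Nat.card_congr (Equiv.ofBijective _ hbij), Nat.card_eq_fintype_card,
      Fintype.card_bool]
  -- for each colouring there are `n!` labellings
  have hTC : ∀ cc : {c : Fin (2 * n) → Bool // Proper M c},
      Nat.card (Fin n ≃ {x : Fin (2 * n) // cc.1 x = true}) = n.factorial := by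
    intro cc
    have flipE := fun x => proper_flip hE subE cc.2 x
    have e2 : {x : Fin (2 * n) // cc.1 x = true} ≃ {x : Fin (2 * n) // ¬ cc.1 x = true} :=
      { toFun := fun x => ⟨pfn M.E ↑x, by rw [flipE, x.2]; simp⟩
        invFun := fun y => ⟨pfn M.E ↑y, by
          have hy : cc.1 ↑y = false := by
            rcases Bool.eq_false_or_eq_true (cc.1 ↑y) with h | h
            · exact absurd h y.2
            · exact h
          rw [flipE, hy]; rfl⟩
        left_inv := fun x => Subtype.ext (pfn_invol hE ↑x)
        right_inv := fun y => Subtype.ext (pfn_invol hE ↑y) }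
    have hcc1 : Fintype.card {x : Fin (2 * n) // cc.1 x = true}
        = Fintype.card {x : Fin (2 * n) // ¬ cc.1 x = true} := Fintype.card_congr e2
    have hcc2 := Fintype.card_subtype_compl (fun x : Fin (2 * n) => cc.1 x = true)
    have hle := Fintype.card_subtype_le (fun x : Fin (2 * n) => cc.1 x = true)
    have hfin : Fintype.card (Fin (2 * n)) = 2 * n := Fintype.card_fin _
    have hcardTC : Fintype.card {x : Fin (2 * n) // cc.1 x = true} = n := by omega
    have e3 := Fintype.equivFinOfCardEq hcardTC
    rw [Nat.card_eq_fintype_card, Fintype.card_equiv e3.symm, Fintype.card_fin]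
  -- sum over the sigma type
  letI : Fintype {c : Fin (2 * n) → Bool // Proper M c} := Fintype.ofFinite _
  letI : ∀ cc : {c : Fin (2 * n) → Bool // Proper M c},
      Fintype (Fin n ≃ {x : Fin (2 * n) // cc.1 x = true}) := fun cc => Fintype.ofFinite _
  rw [Nat.card_eq_fintype_card, Fintype.card_sigma]
  have hterm : ∀ cc : {c : Fin (2 * n) → Bool // Proper M c},
      Fintype.card (Fin n ≃ {x : Fin (2 * n) // cc.1 x = true}) = n.factorial := fun cc => by
    rw [← Nat.card_eq_fintype_card]; exact hTC cc
  rw [Finset.sum_congr rfl (fun cc _ => hterm cc), Finset.sum_const, smul_eq_mul,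
    Finset.card_univ, ← Nat.card_eq_fintype_card, hC2]

end FiberCardCount
/-- Proposition 3.2: `(2n)!` times the number of pairs `(σ₁,σ₂)` of permutations
of `{1,…,n}` generating a transitive subgroup equals `2·n!` times the number of
connected, orientable non-oriented maps `(B,W,E)` on the label set `{1,…,2n}`. -/
theorem edge_liberation_for_oriented_maps (n : ℕ) (hn : 1 ≤ n) :
    (2 * n).factorial *
      Nat.card {p : Equiv.Perm (Fin n) × Equiv.Perm (Fin n) //
        TransitivePair p.1 p.2}
    = 2 * n.factorial *
      Nat.card {M : PMap (Fin (2 * n)) //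
        M.IsMap ∧ M.X = Set.univ ∧ M.Connected ∧ M.Orientable} := by
  classical
  have e0 : (Fin n × Fin 2) ≃ Fin (2 * n) := finProdFinEquiv.trans (finCongr (by ring))
  have hEq : Nat.card (Fin n × Fin 2 ≃ Fin (2 * n)) = (2 * n).factorial := by
    rw [Nat.card_eq_fintype_card, Fintype.card_equiv e0, Fintype.card_prod,
      Fintype.card_fin, Fintype.card_fin, Nat.mul_comm]
  set MSet := {M : PMap (Fin (2 * n)) //
      M.IsMap ∧ M.X = Set.univ ∧ M.Connected ∧ M.Orientable} with hMSet
  set Φ : (Fin n × Fin 2 ≃ Fin (2 * n)) ×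
      {p : Equiv.Perm (Fin n) × Equiv.Perm (Fin n) // TransitivePair p.1 p.2} → MSet :=
    fun a => ⟨toPMapF a.1 a.2.1.1 a.2.1.2,
      toPMapF_isMap _ _ _, rfl, toPMapF_connected _ _ _ a.2.2, toPMapF_orientable _ _ _⟩
    with hΦ
  have h1 : Nat.card ((Fin n × Fin 2 ≃ Fin (2 * n)) ×
      {p : Equiv.Perm (Fin n) × Equiv.Perm (Fin n) // TransitivePair p.1 p.2})
      = Nat.card (Σ M' : MSet, {a // Φ a = M'}) :=
    Nat.card_congr (Equiv.sigmaFiberEquiv Φ).symm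
  have h2 : ∀ M' : MSet, Nat.card {a // Φ a = M'} = 2 * n.factorial := by
    intro M'
    have e : {a // Φ a = M'} ≃ FibT n M'.1 :=
      Equiv.subtypeEquivRight (fun a => Subtype.ext_iff)
    rw [Nat.card_congr e]
    obtain ⟨hM, hX, hconn, hor⟩ := M'.2
    exact fiber_card hn hM hX hconn hor
  letI : Fintype MSet := Fintype.ofFinite _
  letI : ∀ M' : MSet, Fintype {a // Φ a = M'} := fun M' => Fintype.ofFinite _
  have h3 : Nat.card (Σ M' : MSet, {a // Φ a = M'}) = Nat.card MSet * (2 * n.factorial) := by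
    rw [Nat.card_eq_fintype_card, Fintype.card_sigma]
    have hterm : ∀ M' : MSet, Fintype.card {a // Φ a = M'} = 2 * n.factorial := fun M' => by
      rw [← Nat.card_eq_fintype_card]; exact h2 M'
    rw [Finset.sum_congr rfl (fun M' _ => hterm M'), Finset.sum_const, smul_eq_mul,
      Finset.card_univ, ← Nat.card_eq_fintype_card]
  calc (2 * n).factorial *
      Nat.card {p : Equiv.Perm (Fin n) × Equiv.Perm (Fin n) // TransitivePair p.1 p.2}
      = Nat.card ((Fin n × Fin 2 ≃ Fin (2 * n)) ×
        {p : Equiv.Perm (Fin n) × Equiv.Perm (Fin n) // TransitivePair p.1 p.2}) := by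
        rw [Nat.card_prod, hEq]
    _ = Nat.card MSet * (2 * n.factorial) := by rw [h1, h3]
    _ = 2 * n.factorial * Nat.card MSet := by ring

end
end

section
/- The conservative sum over non-oriented maps with one face of size 2n, multiplied by (2n−1)!, equals the liberal sum over non-oriented maps with one face, as formal linear combinations of unlabeled maps: equivalently, the number of triples (B',W',E') of pair-partitions of {1,...,2n} with L(B',W') a single 2n-gon and with underlying unlabeled map M equals (2n−1)! times the number of pairings E of the edge-sides of a fixed labeled 2n-gon yielding the unlabeled map M. -/
open Classical

noncomputable section

variable {α : Type*} {β : Type*}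

namespace CvL

open Equiv Set

lemma sym2_map_image_comp (σ τ : Equiv.Perm α) (A : Set (Sym2 α)) :
    Sym2.map (σ * τ : Equiv.Perm α) '' A = Sym2.map σ '' (Sym2.map τ '' A) := by
  rw [Set.image_image]
  apply Set.image_congr
  intro p _
  rw [Sym2.map_map]
  rfl

lemma relabel_one (M : PMap α) : M.relabel 1 = M := by
  cases M; simp [PMap.relabel]

lemma relabel_mul (M : PMap α) (σ τ : Equiv.Perm α) :
    M.relabel (σ * τ) = (M.relabel τ).relabel σ := by
  have hs : ∀ A : Set (Sym2 α),
      Sym2.map (σ * τ : Equiv.Perm α) '' A = Sym2.map σ '' (Sym2.map τ '' A) :=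
    sym2_map_image_comp σ τ
  have hx : ∀ X : Set α, (σ * τ : Equiv.Perm α) '' X = σ '' (τ '' X) := by
    intro X; rw [Set.image_image]; rfl
  cases M
  simp only [PMap.relabel, PMap.mk.injEq]
  exact ⟨hx _, hs _, hs _, hs _⟩

instance : MulAction (Equiv.Perm α) (PMap α) where
  smul σ M := M.relabel σ
  one_smul := relabel_one
  mul_smul σ τ M := relabel_mul M σ τ

lemma smul_def (σ : Equiv.Perm α) (M : PMap α) : σ • M = M.relabel σ := rfl

lemma relabel_relabel_inv (M : PMap α) (σ : Equiv.Perm α) :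
    (M.relabel σ).relabel σ⁻¹ = M := by
  rw [← relabel_mul, inv_mul_cancel, relabel_one]

lemma mem_sym2_map (σ : Equiv.Perm α) (p : Sym2 α) (x : α) :
    x ∈ Sym2.map σ p ↔ σ.symm x ∈ p := by
  rw [Sym2.mem_map]
  constructor
  · rintro ⟨a, ha, rfl⟩; simpa using ha
  · intro h; exact ⟨σ.symm x, h, by simp⟩

lemma isPairPartitionOn_relabel {X : Set α} {P : Set (Sym2 α)}
    (h : IsPairPartitionOn X P) (σ : Equiv.Perm α) :
    IsPairPartitionOn (σ '' X) (Sym2.map σ '' P) := by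
  obtain ⟨h1, h2⟩ := h
  constructor
  · rintro p ⟨q, hq, rfl⟩
    refine ⟨?_, ?_⟩
    · rw [Sym2.isDiag_map σ.injective]; exact (h1 q hq).1
    · intro x hx
      rw [mem_sym2_map] at hx
      exact ⟨σ.symm x, (h1 q hq).2 _ hx, by simp⟩
  · rintro x ⟨y, hy, rfl⟩
    obtain ⟨p, ⟨hp, hyp⟩, hu⟩ := h2 y hy
    refine ⟨Sym2.map σ p, ⟨⟨p, hp, rfl⟩, by rw [mem_sym2_map]; simpa⟩, ?_⟩
    rintro q ⟨⟨r, hr, rfl⟩, hxr⟩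
    rw [mem_sym2_map] at hxr
    simp only [Equiv.symm_apply_apply] at hxr
    rw [hu r ⟨hr, hxr⟩]

lemma pairAdj_relabel (σ : Equiv.Perm α) (S : Set (Sym2 α)) (x y : α) :
    pairAdj (Sym2.map σ '' S) (σ x) (σ y) ↔ pairAdj S x y := by
  constructor
  · rintro ⟨p, ⟨q, hq, rfl⟩, hx, hy⟩
    rw [mem_sym2_map] at hx hy
    simp only [Equiv.symm_apply_apply] at hx hy
    exact ⟨q, hq, hx, hy⟩
  · rintro ⟨p, hp, hx, hy⟩
    exact ⟨Sym2.map σ p, ⟨p, hp, rfl⟩, by rw [mem_sym2_map]; simpa,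
      by rw [mem_sym2_map]; simpa⟩

lemma reach_relabel (σ : Equiv.Perm α) (S : Set (Sym2 α)) (x y : α) :
    reach (Sym2.map σ '' S) (σ x) (σ y) ↔ reach S x y := by
  constructor
  · intro h
    have key : ∀ u v, reach (Sym2.map σ '' S) u v → reach S (σ.symm u) (σ.symm v) := by
      intro u v h
      induction h with
      | refl => exact Relation.ReflTransGen.refl
      | @tail b c _ hadj ih =>
        refine ih.tail ?_
        have hb : b = σ (σ.symm b) := by simp
        have hc : c = σ (σ.symm c) := by simp
        rw [hb, hc] at hadj
        exact (pairAdj_relabel σ S (σ.symm b) (σ.symm c)).mp hadj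
    simpa using key _ _ h
  · intro h
    induction h with
    | refl => exact Relation.ReflTransGen.refl
    | @tail b c _ hadj ih => exact ih.tail ((pairAdj_relabel σ S _ _).mpr hadj)

lemma isMap_relabel {M : PMap α} (h : M.IsMap) (σ : Equiv.Perm α) : (M.relabel σ).IsMap :=
  ⟨isPairPartitionOn_relabel h.1 σ, isPairPartitionOn_relabel h.2.1 σ, isPairPartitionOn_relabel h.2.2 σ⟩

lemma onePolygon_relabel {M : PMap α} (h : OnePolygon M) (σ : Equiv.Perm α) :
    OnePolygon (M.relabel σ) := by
  rintro x ⟨a, ha, rfl⟩ y ⟨b, hb, rfl⟩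
  have hBW : (M.relabel σ).B ∪ (M.relabel σ).W = Sym2.map σ '' (M.B ∪ M.W) := by
    simp [PMap.relabel, Set.image_union]
  rw [hBW, reach_relabel]
  exact h a ha b hb

lemma exists_partner {B : Set (Sym2 α)} (hB : IsPairPartitionOn Set.univ B) :
    ∃ b : α → α, Function.Involutive b ∧ (∀ x, b x ≠ x) ∧ (∀ x, s(x, b x) ∈ B) ∧
      ∀ x p, p ∈ B → x ∈ p → p = s(x, b x) := by
  obtain ⟨hdiag, huniq⟩ := hB
  choose p hp hu using fun x => huniq x (Set.mem_univ x)
  have hx : ∀ x, ∃ y, p x = s(x, y) := fun x => Sym2.mem_iff_exists.mp (hp x).2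
  choose b hb using hx
  have hmem : ∀ x, s(x, b x) ∈ B := fun x => hb x ▸ (hp x).1
  have hne : ∀ x, b x ≠ x := by
    intro x h
    have := (hdiag _ (hmem x)).1
    rw [h] at this
    exact this (Sym2.diag_isDiag x)
  have huu : ∀ x q, q ∈ B → x ∈ q → q = s(x, b x) := by
    intro x q hq hxq
    have := hu x q ⟨hq, hxq⟩
    rw [this, hb]
  have hinv : Function.Involutive b := by
    intro x
    have h1 : s(x, b x) = s(b x, b (b x)) := by
      apply huu (b x) _ (hmem x)
      rw [Sym2.mem_iff]; right; rfl
    rw [Sym2.eq_iff] at h1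
    rcases h1 with ⟨h, _⟩ | ⟨h, _⟩
    · exact absurd h.symm (hne x)
    · exact h.symm
  exact ⟨b, hinv, hne, hmem, huu⟩

lemma exists_polygon_relabel (n : ℕ) (hn : 1 ≤ n) (M₀ : PMap (Fin (2 * n)))
    (hM₀ : M₀.IsMap) (hX : M₀.X = Set.univ) (hface : OnePolygon M₀) :
    ∃ (E₀ : Set (Sym2 (Fin (2 * n)))) (ρ : Equiv.Perm (Fin (2 * n))),
      M₀ = (PMap.mk Set.univ (polygonB n) (polygonW n) E₀).relabel ρ := by
  haveI : NeZero (2 * n) := ⟨by omega⟩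
  have hBpp : IsPairPartitionOn Set.univ M₀.B := hX ▸ hM₀.1
  have hWpp : IsPairPartitionOn Set.univ M₀.W := hX ▸ hM₀.2.1
  obtain ⟨b, hbInv, hbne, hbmem, hbu⟩ := exists_partner hBpp
  obtain ⟨w, hwInv, hwne, hwmem, hwu⟩ := exists_partner hWpp
  set c : Equiv.Perm (Fin (2 * n)) := (hbInv.toPerm).trans (hwInv.toPerm) with hcdef
  have hc : ∀ z, c z = w (b z) := fun _ => rfl
  have hwc : ∀ z, w (c z) = b z := fun z => hwInv (b z)
  set x₀ : Fin (2 * n) := 0 with hx0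
  -- basic power identities
  have hpow_succ : ∀ (k : ℕ) (x : Fin (2 * n)), (c ^ (k + 1)) x = c ((c ^ k) x) := by
    intro k x; rw [pow_succ']; rfl
  have hpow_succ2 : ∀ (k : ℕ) (x : Fin (2 * n)), (c ^ (k + 1)) x = (c ^ k) (c x) := by
    intro k x; rw [pow_succ]; rfl
  have hpow_add : ∀ (i j : ℕ) (x : Fin (2 * n)), (c ^ (i + j)) x = (c ^ i) ((c ^ j) x) := by
    intro i j x; rw [pow_add]; rfl
  have hbck : ∀ (k : ℕ) (x : Fin (2 * n)), (c ^ k) (b ((c ^ k) x)) = b x := by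
    intro k
    induction k with
    | zero => intro x; simp
    | succ k ih =>
      intro x
      rw [hpow_succ2 k x, hpow_succ k]
      rw [ih (c x)]
      show c (b (c x)) = b x
      calc c (b (c x)) = w (b (b (c x))) := rfl
        _ = w (c x) := by rw [hbInv]
        _ = b x := hwc x
  -- the orbit of x₀ under c
  set t : ℕ := Function.minimalPeriod (⇑c) x₀ with htdef
  have hper : Function.IsPeriodicPt (⇑c) (orderOf c) x₀ := by
    show (⇑c)^[orderOf c] x₀ = x₀
    rw [← Equiv.Perm.coe_pow, pow_orderOf_eq_one]; rfl
  have htpos : 0 < t := hper.minimalPeriod_pos (orderOf_pos c)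
  have hct : (c ^ t) x₀ = x₀ := by
    rw [Equiv.Perm.coe_pow] at *
    exact Function.iterate_minimalPeriod
  have hinj : ∀ i < t, ∀ j < t, (c ^ i) x₀ = (c ^ j) x₀ → i = j := by
    intro i hi j hj h
    exact Function.iterate_injOn_Iio_minimalPeriod (f := ⇑c) (x := x₀) hi hj h
  classical
  set O : Finset (Fin (2 * n)) := (Finset.range t).image (fun k => (c ^ k) x₀) with hOdef
  have hmemO : ∀ y, y ∈ O ↔ ∃ k, k < t ∧ (c ^ k) x₀ = y := by
    intro y; simp [hOdef]
  have hOcard : O.card = t := by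
    rw [hOdef, Finset.card_image_of_injOn, Finset.card_range]
    intro i hi j hj h
    exact hinj i (Finset.mem_range.mp hi) j (Finset.mem_range.mp hj) h
  have hOc : ∀ y ∈ O, c y ∈ O := by
    intro y hy
    obtain ⟨k, hk, rfl⟩ := (hmemO y).mp hy
    rcases Nat.lt_or_ge (k + 1) t with h | h
    · exact (hmemO _).mpr ⟨k + 1, h, hpow_succ k x₀⟩
    · have : k + 1 = t := by omega
      refine (hmemO _).mpr ⟨0, htpos, ?_⟩
      rw [← hpow_succ k x₀, this, hct]; simp
  have hOcinv : ∀ y ∈ O, ∃ z ∈ O, c z = y := by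
    intro y hy
    obtain ⟨k, hk, rfl⟩ := (hmemO y).mp hy
    rcases Nat.eq_zero_or_pos k with rfl | hk0
    · refine ⟨(c ^ (t - 1)) x₀, (hmemO _).mpr ⟨t - 1, by omega, rfl⟩, ?_⟩
      rw [← hpow_succ (t - 1) x₀]
      have : t - 1 + 1 = t := by omega
      rw [this, hct]; simp
    · refine ⟨(c ^ (k - 1)) x₀, (hmemO _).mpr ⟨k - 1, by omega, rfl⟩, ?_⟩
      have hkk : k - 1 + 1 = k := by omega
      rw [← hpow_succ (k - 1) x₀, hkk]
  set bO : Finset (Fin (2 * n)) := O.image b with hbOdef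
  have hmembO : ∀ y, y ∈ bO ↔ ∃ u ∈ O, b u = y := by
    intro y; simp [hbOdef]
  have hdisj : ∀ u, u ∈ O → u ∈ bO → False := by
    intro u hu hbu'
    obtain ⟨i, hi, hiu⟩ := (hmemO u).mp hu
    obtain ⟨v, hv, hvu⟩ := (hmembO u).mp hbu'
    obtain ⟨j, hj, hjv⟩ := (hmemO v).mp hv
    -- b x₀ = c ^ (j + i) x₀
    have hbx : b x₀ = (c ^ (j + i)) x₀ := by
      have h1 : (c ^ j) (b ((c ^ j) x₀)) = b x₀ := hbck j x₀
      rw [hjv, hvu, ← hiu] at h1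
      rw [← h1, hpow_add]
    set m := j + i with hm
    rcases Nat.even_or_odd m with ⟨k, hk⟩ | ⟨k, hk⟩
    · -- b fixes c^k x₀
      have h1 : (c ^ k) (b ((c ^ k) x₀)) = (c ^ k) ((c ^ k) x₀) := by
        rw [hbck k x₀, hbx, hk, ← hpow_add]
      have h2 := (c ^ k).injective h1
      exact hbne _ h2
    · -- w fixes c^(k+1) x₀
      have h1 : (c ^ k) (b ((c ^ k) x₀)) = (c ^ k) ((c ^ (k + 1)) x₀) := by
        rw [hbck k x₀, hbx, hk, ← hpow_add]
        have hkk : 2 * k + 1 = k + (k + 1) := by omega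
        rw [hkk]
      have h2 := (c ^ k).injective h1
      have h3 : w ((c ^ (k + 1)) x₀) = (c ^ (k + 1)) x₀ := by
        conv_lhs => rw [hpow_succ k x₀]
        rw [hwc]
        exact h2
      exact hwne _ h3
  have hDisj : Disjoint O bO := Finset.disjoint_left.mpr (fun {u} hu hbu' => hdisj u hu hbu')
  -- coverage
  have hclosed : ∀ y z, y ∈ O ∪ bO → pairAdj (M₀.B ∪ M₀.W) y z → z ∈ O ∪ bO := by
    intro y z hy ⟨p, hp, hyp, hzp⟩
    have hbcase : ∀ q ∈ M₀.B, y ∈ q → z ∈ q → z ∈ O ∪ bO := by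
      intro q hq hyq hzq
      rw [hbu y q hq hyq, Sym2.mem_iff] at hzq
      rcases hzq with rfl | rfl
      · exact hy
      · rcases Finset.mem_union.mp hy with h | h
        · exact Finset.mem_union_right _ ((hmembO _).mpr ⟨y, h, rfl⟩)
        · obtain ⟨u, hu, rfl⟩ := (hmembO y).mp h
          rw [hbInv u]
          exact Finset.mem_union_left _ hu
    have hwcase : ∀ q ∈ M₀.W, y ∈ q → z ∈ q → z ∈ O ∪ bO := by
      intro q hq hyq hzq
      rw [hwu y q hq hyq, Sym2.mem_iff] at hzq
      rcases hzq with rfl | rfl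
      · exact hy
      · rcases Finset.mem_union.mp hy with h | h
        · obtain ⟨z', hz', rfl⟩ := hOcinv y h
          rw [hwc z']
          exact Finset.mem_union_right _ ((hmembO _).mpr ⟨z', hz', rfl⟩)
        · obtain ⟨u, hu, rfl⟩ := (hmembO y).mp h
          rw [show w (b u) = c u from rfl]
          exact Finset.mem_union_left _ (hOc u hu)
    rcases hp with hp | hp
    · exact hbcase p hp hyp hzp
    · exact hwcase p hp hyp hzp
  have hcover : ∀ y : Fin (2 * n), y ∈ O ∪ bO := by
    intro y
    have hreach : reach (M₀.B ∪ M₀.W) x₀ y := by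
      apply hface x₀ _ y
      · rw [hX]; exact Set.mem_univ y
      · rw [hX]; exact Set.mem_univ x₀
    clear hX
    induction hreach with
    | refl => exact Finset.mem_union_left _ ((hmemO x₀).mpr ⟨0, htpos, by simp⟩)
    | @tail u v _ hadj ih => exact hclosed u v ih hadj
  have htn : t = n := by
    have h1 : (O ∪ bO).card = 2 * n := by
      have : O ∪ bO = Finset.univ := Finset.eq_univ_iff_forall.mpr hcover
      rw [this, Finset.card_univ, Fintype.card_fin]
    have h2 : (O ∪ bO).card = t + t := by
      rw [Finset.card_union_of_disjoint hDisj, hOcard, hbOdef,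
        Finset.card_image_of_injective _ hbInv.injective, hOcard]
    omega
  -- the labelling function
  set r : Fin (2 * n) → Fin (2 * n) := fun k => if Even k.val then (c ^ (k.val / 2)) x₀
    else b ((c ^ (k.val / 2)) x₀) with hrdef
  have hrinj : Function.Injective r := by
    intro k k' h
    have hk2 : k.val / 2 < t := by have := k.isLt; omega
    have hk'2 : k'.val / 2 < t := by have := k'.isLt; omega
    rw [hrdef] at h
    simp only at h
    by_cases he : Even k.val <;> by_cases he' : Even k'.val
    · rw [if_pos he, if_pos he'] at h
      have := hinj _ hk2 _ hk'2 h
      apply Fin.ext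
      rw [Nat.even_iff] at he he'
      omega
    · rw [if_pos he, if_neg he'] at h
      exact absurd ((hmembO _).mpr ⟨_, (hmemO _).mpr ⟨_, hk'2, rfl⟩, h.symm⟩)
        (fun hb' => hdisj _ ((hmemO _).mpr ⟨_, hk2, rfl⟩) hb')
    · rw [if_neg he, if_pos he'] at h
      exact absurd ((hmembO _).mpr ⟨_, (hmemO _).mpr ⟨_, hk2, rfl⟩, h⟩)
        (fun hb' => hdisj _ ((hmemO _).mpr ⟨_, hk'2, rfl⟩) hb')
    · rw [if_neg he, if_neg he'] at h
      have h2 := hbInv.injective h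
      have := hinj _ hk2 _ hk'2 h2
      apply Fin.ext
      rw [Nat.even_iff] at he he'
      omega
  have hrbij : Function.Bijective r := Finite.injective_iff_bijective.mp hrinj
  set ρ : Equiv.Perm (Fin (2 * n)) := Equiv.ofBijective r hrbij with hrhodef
  have hρ : ∀ k, ρ k = r k := fun _ => rfl
  have hρe : ∀ k : Fin (2 * n), Even k.val → ρ k = (c ^ (k.val / 2)) x₀ := by
    intro k hk; rw [hρ, hrdef]; simp only [if_pos hk]
  have hρo : ∀ k : Fin (2 * n), ¬ Even k.val → ρ k = b ((c ^ (k.val / 2)) x₀) := by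
    intro k hk; rw [hρ, hrdef]; simp only [if_neg hk]
  -- Fin arithmetic
  have h2n : 2 ≤ 2 * n := by omega
  have hone : (1 : Fin (2 * n)).val = 1 := by
    rw [Fin.val_one']; exact Nat.mod_eq_of_lt (by omega)
  have hval1 : ∀ k : Fin (2 * n), (k + 1).val = (k.val + 1) % (2 * n) := by
    intro k; rw [Fin.val_add, hone]
  have hrot : ∀ k : Fin (2 * n), finRotate (2 * n) k = k + 1 := by
    obtain ⟨m, rfl⟩ : ∃ m, n = m + 1 := ⟨n - 1, by omega⟩
    intro k
    exact finRotate_succ_apply (n := 2 * m + 1) k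
  -- the image of polygonB
  have hB : Sym2.map (⇑ρ) '' polygonB n = M₀.B := by
    apply Set.Subset.antisymm
    · rintro p ⟨q, ⟨k, hk, rfl⟩, rfl⟩
      rw [hrot k, Sym2.map_pair_eq]
      have hkval : k.val + 1 < 2 * n := by
        have := k.isLt; rw [Nat.even_iff] at hk; omega
      have h1 : (k + 1).val = k.val + 1 := by rw [hval1]; exact Nat.mod_eq_of_lt hkval
      have h2 : ¬ Even (k + 1).val := by
        rw [h1]; rw [Nat.even_iff] at hk ⊢; omega
      rw [hρe k hk, hρo _ h2, h1]
      have h3 : (k.val + 1) / 2 = k.val / 2 := by rw [Nat.even_iff] at hk; omega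
      rw [h3]
      exact hbmem _
    · intro p hp
      obtain ⟨⟨a, a'⟩, rfl⟩ := Quot.exists_rep p
      have ha : a ∈ s(a, a') := Sym2.mem_mk_left a a'
      have hpa : s(a, a') = s(a, b a) := hbu a _ hp ha
      set k : Fin (2 * n) := ρ.symm a with hkdef
      have hak : a = ρ k := by rw [hkdef, Equiv.apply_symm_apply]
      by_cases he : Even k.val
      · -- a = c^(k/2) x₀, b a = ρ (k+1)
        have hkval : k.val + 1 < 2 * n := by
          have := k.isLt; rw [Nat.even_iff] at he; omega
        have h1 : (k + 1).val = k.val + 1 := by rw [hval1]; exact Nat.mod_eq_of_lt hkval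
        have h2 : ¬ Even (k + 1).val := by
          rw [h1]; rw [Nat.even_iff] at he ⊢; omega
        have h3 : ρ (k + 1) = b a := by
          rw [hρo _ h2, h1, hak, hρe k he]
          have hdiv : (k.val + 1) / 2 = k.val / 2 := by rw [Nat.even_iff] at he; omega
          rw [hdiv]
        refine ⟨s(k, finRotate (2 * n) k), ⟨k, he, rfl⟩, ?_⟩
        rw [hrot k, Sym2.map_pair_eq, ← hak, h3]
        exact hpa.symm
      · -- a = b (c^j x₀); use k' = k - 1
        have hk1 : 1 ≤ k.val := by
          by_contra h
          have : k.val = 0 := by omega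
          rw [Nat.even_iff, this] at he; omega
        set k' : Fin (2 * n) := ⟨k.val - 1, Nat.lt_of_le_of_lt (Nat.sub_le _ _) k.isLt⟩ with hk'def
        have he' : Even k'.val := by
          show Even (k.val - 1)
          rw [Nat.even_iff] at he ⊢; omega
        have hk'1 : k' + 1 = k := by
          apply Fin.ext
          rw [hval1]
          show (k.val - 1 + 1) % (2 * n) = k.val
          have hs : k.val - 1 + 1 = k.val := by omega
          rw [hs]
          exact Nat.mod_eq_of_lt k.isLt
        have h3 : ρ k' = b a := by
          rw [hρe k' he', hak, hρo k he, hbInv]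
          have hdiv : k'.val / 2 = k.val / 2 := by
            show (k.val - 1) / 2 = k.val / 2
            rw [Nat.even_iff] at he; omega
          rw [hdiv]
        refine ⟨s(k', finRotate (2 * n) k'), ⟨k', he', rfl⟩, ?_⟩
        rw [hrot k', Sym2.map_pair_eq, hk'1, ← hak, h3, Sym2.eq_swap]
        exact hpa.symm
  -- the image of polygonW
  have hctn : (c ^ n) x₀ = x₀ := by
    have h := hct
    rw [htn] at h
    exact h
  have hW : Sym2.map (⇑ρ) '' polygonW n = M₀.W := by
    apply Set.Subset.antisymm
    · rintro p ⟨q, ⟨k, hk, rfl⟩, rfl⟩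
      rw [hrot k, Sym2.map_pair_eq]
      rcases Nat.lt_or_ge (k.val + 1) (2 * n) with hkval | hkval
      · have h1 : (k + 1).val = k.val + 1 := by rw [hval1]; exact Nat.mod_eq_of_lt hkval
        have h2 : Even (k + 1).val := by
          rw [h1, Nat.even_iff]; rw [Nat.even_iff] at hk; omega
        rw [hρe _ h2, hρo k hk, h1]
        have h3 : (k.val + 1) / 2 = k.val / 2 + 1 := by rw [Nat.even_iff] at hk; omega
        rw [h3]
        have h4 : (c ^ (k.val / 2 + 1)) x₀ = w (b ((c ^ (k.val / 2)) x₀)) := by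
          rw [hpow_succ]; rfl
        rw [h4]
        exact hwmem _
      · -- wrap-around: k = 2n - 1
        have hkl : k.val = 2 * n - 1 := by have := k.isLt; omega
        have h1 : (k + 1).val = 0 := by
          rw [hval1, hkl]
          have hs : 2 * n - 1 + 1 = 2 * n := by omega
          rw [hs, Nat.mod_self]
        have h2 : Even (k + 1).val := by rw [h1]; exact ⟨0, rfl⟩
        rw [hρe _ h2, hρo k hk, h1]
        simp only [Nat.zero_div, pow_zero, Equiv.Perm.coe_one, id_eq]
        have h3 : k.val / 2 = n - 1 := by omega
        rw [h3]
        have h4 : w (b ((c ^ (n - 1)) x₀)) = x₀ := by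
          rw [show w (b ((c ^ (n - 1)) x₀)) = c ((c ^ (n - 1)) x₀) from rfl, ← hpow_succ]
          have hs : n - 1 + 1 = n := by omega
          rw [hs, hctn]
        have h5 := hwmem (b ((c ^ (n - 1)) x₀))
        rw [h4] at h5
        exact h5
    · intro p hp
      obtain ⟨⟨a, a'⟩, rfl⟩ := Quot.exists_rep p
      have ha : a ∈ s(a, a') := Sym2.mem_mk_left a a'
      have hpa : s(a, a') = s(a, w a) := hwu a _ hp ha
      set k : Fin (2 * n) := ρ.symm a with hkdef
      have hak : a = ρ k := by rw [hkdef, Equiv.apply_symm_apply]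
      by_cases he : Even k.val
      · -- a = c^j x₀; w a = ρ (k - 1)
        set j := k.val / 2 with hjdef
        rcases Nat.eq_zero_or_pos j with hj0 | hjpos
        · -- a = x₀ (k = 0); w a = ρ (2n - 1)
          have hk0 : k.val = 0 := by rw [Nat.even_iff] at he; omega
          have hax : a = x₀ := by
            rw [hak, hρe k he, hk0]
            simp
          set kl : Fin (2 * n) := ⟨2 * n - 1, by omega⟩ with hkldef
          have hkle : ¬ Even kl.val := by
            show ¬ Even (2 * n - 1)
            rw [Nat.even_iff]; omega
          have h5 : ρ kl = b ((c ^ (n - 1)) x₀) := by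
            rw [hρo kl hkle]
            have hdiv : kl.val / 2 = n - 1 := by
              show (2 * n - 1) / 2 = n - 1
              omega
            rw [hdiv]
          have h6 : w a = ρ kl := by
            rw [h5, hax]
            have hx1 : x₀ = c ((c ^ (n - 1)) x₀) := by
              rw [← hpow_succ]
              have hs : n - 1 + 1 = n := by omega
              rw [hs, hctn]
            conv_lhs => rw [hx1]
            exact hwc _
          have h7 : kl + 1 = k := by
            apply Fin.ext
            rw [hval1, hk0]
            show (2 * n - 1 + 1) % (2 * n) = 0
            have hs : 2 * n - 1 + 1 = 2 * n := by omega
            rw [hs, Nat.mod_self]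
          refine ⟨s(kl, finRotate (2 * n) kl), ⟨kl, hkle, rfl⟩, ?_⟩
          rw [hrot kl, Sym2.map_pair_eq, h7, ← hak, ← h6, Sym2.eq_swap]
          exact hpa.symm
        · -- j ≥ 1
          have hk2 : 2 ≤ k.val := by rw [Nat.even_iff] at he; omega
          set k' : Fin (2 * n) := ⟨k.val - 1, Nat.lt_of_le_of_lt (Nat.sub_le _ _) k.isLt⟩ with hk'def
          have he' : ¬ Even k'.val := by
            show ¬ Even (k.val - 1)
            rw [Nat.even_iff] at he ⊢; omega
          have hk'1 : k' + 1 = k := by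
            apply Fin.ext
            rw [hval1]
            show (k.val - 1 + 1) % (2 * n) = k.val
            have hs : k.val - 1 + 1 = k.val := by omega
            rw [hs]
            exact Nat.mod_eq_of_lt k.isLt
          have h5 : ρ k' = b ((c ^ (j - 1)) x₀) := by
            rw [hρo k' he']
            have hdiv : k'.val / 2 = j - 1 := by
              show (k.val - 1) / 2 = j - 1
              rw [Nat.even_iff] at he
              omega
            rw [hdiv]
          have h6 : w a = ρ k' := by
            rw [h5, hak, hρe k he, ← hjdef]
            have hx1 : (c ^ j) x₀ = c ((c ^ (j - 1)) x₀) := by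
              rw [← hpow_succ]
              have hs : j - 1 + 1 = j := by omega
              rw [hs]
            conv_lhs => rw [hx1]
            exact hwc _
          refine ⟨s(k', finRotate (2 * n) k'), ⟨k', he', rfl⟩, ?_⟩
          rw [hrot k', Sym2.map_pair_eq, hk'1, ← hak, ← h6, Sym2.eq_swap]
          exact hpa.symm
      · -- a = b (c^j x₀); w a = c^(j+1) x₀ = ρ (k+1)
        set j := k.val / 2 with hjdef
        have hwa : w a = (c ^ (j + 1)) x₀ := by
          rw [hak, hρo k he, ← hjdef]
          rw [show w (b ((c ^ j) x₀)) = c ((c ^ j) x₀) from rfl, ← hpow_succ]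
        rcases Nat.lt_or_ge (k.val + 1) (2 * n) with hkval | hkval
        · have h1 : (k + 1).val = k.val + 1 := by rw [hval1]; exact Nat.mod_eq_of_lt hkval
          have h2 : Even (k + 1).val := by
            rw [h1, Nat.even_iff]; rw [Nat.even_iff] at he; omega
          have h3 : ρ (k + 1) = w a := by
            rw [hρe _ h2, hwa, h1]
            have hdiv : (k.val + 1) / 2 = j + 1 := by
              rw [Nat.even_iff] at he
              omega
            rw [hdiv]
          refine ⟨s(k, finRotate (2 * n) k), ⟨k, he, rfl⟩, ?_⟩
          rw [hrot k, Sym2.map_pair_eq, ← hak, h3]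
          exact hpa.symm
        · have hkl : k.val = 2 * n - 1 := by have := k.isLt; omega
          have h1 : (k + 1).val = 0 := by
            rw [hval1, hkl]
            have hs : 2 * n - 1 + 1 = 2 * n := by omega
            rw [hs, Nat.mod_self]
          have h2 : Even (k + 1).val := by rw [h1]; exact ⟨0, rfl⟩
          have h3 : ρ (k + 1) = w a := by
            rw [hρe _ h2, hwa, h1]
            simp only [Nat.zero_div, pow_zero, Equiv.Perm.coe_one, id_eq]
            have hs : j + 1 = n := by
              rw [Nat.even_iff] at he
              omega
            rw [hs, hctn]
          refine ⟨s(k, finRotate (2 * n) k), ⟨k, he, rfl⟩, ?_⟩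
          rw [hrot k, Sym2.map_pair_eq, ← hak, h3]
          exact hpa.symm
  -- assemble
  refine ⟨Sym2.map (⇑ρ.symm) '' M₀.E, ρ, ?_⟩
  have himg : Sym2.map (⇑ρ) '' (Sym2.map (⇑ρ.symm) '' M₀.E) = M₀.E := by
    rw [Set.image_image]
    have hid : ∀ p : Sym2 (Fin (2 * n)), Sym2.map (⇑ρ) (Sym2.map (⇑ρ.symm) p) = p := by
      intro p
      rw [Sym2.map_map, Equiv.self_comp_symm]
      exact congrFun Sym2.map_id p
    simp only [hid, Set.image_id']
  have hXu : (⇑ρ) '' Set.univ = M₀.X := by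
    rw [Set.image_univ, Equiv.range_eq_univ, hX]
  show M₀ = PMap.mk ((⇑ρ) '' Set.univ) (Sym2.map (⇑ρ) '' polygonB n)
    (Sym2.map (⇑ρ) '' polygonW n) (Sym2.map (⇑ρ) '' (Sym2.map (⇑ρ.symm) '' M₀.E))
  rw [hXu, hB, hW, himg]


section Polygon

variable {n : ℕ}

lemma finRotate_eq_add_one [NeZero (2 * n)] (hn : 1 ≤ n) (k : Fin (2 * n)) :
    finRotate (2 * n) k = k + 1 := by
  obtain ⟨m, rfl⟩ : ∃ m, n = m + 1 := ⟨n - 1, by omega⟩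
  exact finRotate_succ_apply (n := 2 * m + 1) k

lemma fin_add_one_val [NeZero (2 * n)] (hn : 1 ≤ n) (k : Fin (2 * n)) :
    (k + 1).val = (k.val + 1) % (2 * n) := by
  haveI : NeZero (2 * n) := ⟨by omega⟩
  rw [Fin.val_add, Fin.val_one', Nat.mod_eq_of_lt (show 1 < 2 * n by omega)]

lemma mem_polygonB [NeZero (2 * n)] (hn : 1 ≤ n) (a b' : Fin (2 * n)) :
    s(a, b') ∈ polygonB n ↔ (Even a.val ∧ b' = a + 1) ∨ (Even b'.val ∧ a = b' + 1) := by
  constructor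
  · rintro ⟨k, hk, heq⟩
    rw [finRotate_eq_add_one hn] at heq
    rw [Sym2.eq_iff] at heq
    rcases heq with ⟨rfl, rfl⟩ | ⟨rfl, rfl⟩
    · exact Or.inl ⟨hk, rfl⟩
    · exact Or.inr ⟨hk, rfl⟩
  · rintro (⟨he, rfl⟩ | ⟨he, rfl⟩)
    · exact ⟨a, he, by rw [finRotate_eq_add_one hn]⟩
    · exact ⟨b', he, by rw [finRotate_eq_add_one hn]; exact Sym2.eq_swap⟩

lemma mem_polygonW [NeZero (2 * n)] (hn : 1 ≤ n) (a b' : Fin (2 * n)) :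
    s(a, b') ∈ polygonW n ↔ (¬ Even a.val ∧ b' = a + 1) ∨ (¬ Even b'.val ∧ a = b' + 1) := by
  constructor
  · rintro ⟨k, hk, heq⟩
    rw [finRotate_eq_add_one hn] at heq
    rw [Sym2.eq_iff] at heq
    rcases heq with ⟨rfl, rfl⟩ | ⟨rfl, rfl⟩
    · exact Or.inl ⟨hk, rfl⟩
    · exact Or.inr ⟨hk, rfl⟩
  · rintro (⟨he, rfl⟩ | ⟨he, rfl⟩)
    · exact ⟨a, he, by rw [finRotate_eq_add_one hn]⟩
    · exact ⟨b', he, by rw [finRotate_eq_add_one hn]; exact Sym2.eq_swap⟩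

lemma fin_val_parity [NeZero (2 * n)] (hn : 1 ≤ n) (a b : Fin (2 * n)) :
    (a + b).val % 2 = (a.val + b.val) % 2 := by
  haveI : NeZero (2 * n) := ⟨by omega⟩
  rw [Fin.val_add]
  exact Nat.mod_mod_of_dvd _ ⟨n, rfl⟩

lemma fin_neg_val_parity [NeZero (2 * n)] (hn : 1 ≤ n) (b : Fin (2 * n)) :
    (-b).val % 2 = b.val % 2 := by
  haveI : NeZero (2 * n) := ⟨by omega⟩
  rw [Fin.coe_neg]
  rcases Nat.eq_zero_or_pos b.val with h | h
  · rw [h, Nat.sub_zero, Nat.mod_self]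
  · have hlt : 2 * n - b.val < 2 * n := by have := b.isLt; omega
    rw [Nat.mod_eq_of_lt hlt]
    have := b.isLt
    omega

lemma fin_sub_val_parity [NeZero (2 * n)] (hn : 1 ≤ n) (a b : Fin (2 * n)) :
    (a - b).val % 2 = (a.val + b.val) % 2 := by
  rw [sub_eq_add_neg]
  have h1 := fin_val_parity hn a (-b)
  have h2 := fin_neg_val_parity hn b
  omega

lemma image_eq_of_closed {f g : α → α} (hfg : ∀ x, f (g x) = x)
    {A : Set (Sym2 α)} (h1 : ∀ p ∈ A, Sym2.map f p ∈ A) (h2 : ∀ p ∈ A, Sym2.map g p ∈ A) :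
    Sym2.map f '' A = A := by
  apply Set.Subset.antisymm
  · rintro p ⟨q, hq, rfl⟩; exact h1 q hq
  · intro p hp
    refine ⟨Sym2.map g p, h2 p hp, ?_⟩
    rw [Sym2.map_map]
    have hcomp : (f ∘ g) = id := funext hfg
    rw [hcomp]
    exact congrFun Sym2.map_id p

lemma polygonB_closed_add [NeZero (2 * n)] (hn : 1 ≤ n) (m : Fin (2 * n)) (hm : Even m.val) :
    ∀ p ∈ polygonB n, Sym2.map (· + m) p ∈ polygonB n := by
  rintro p ⟨k, hk, rfl⟩
  rw [finRotate_eq_add_one hn, Sym2.map_pair_eq]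
  rw [mem_polygonB hn]
  left
  refine ⟨?_, add_right_comm k 1 m⟩
  have h := fin_val_parity hn k m
  rw [Nat.even_iff] at hk hm ⊢
  omega

lemma polygonW_closed_add [NeZero (2 * n)] (hn : 1 ≤ n) (m : Fin (2 * n)) (hm : Even m.val) :
    ∀ p ∈ polygonW n, Sym2.map (· + m) p ∈ polygonW n := by
  rintro p ⟨k, hk, rfl⟩
  rw [finRotate_eq_add_one hn, Sym2.map_pair_eq]
  rw [mem_polygonW hn]
  left
  refine ⟨?_, add_right_comm k 1 m⟩
  have h := fin_val_parity hn k m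
  rw [Nat.even_iff] at hk hm ⊢
  omega

lemma polygonB_closed_sub [NeZero (2 * n)] (hn : 1 ≤ n) (m : Fin (2 * n)) (hm : ¬ Even m.val) :
    ∀ p ∈ polygonB n, Sym2.map (m - ·) p ∈ polygonB n := by
  rintro p ⟨k, hk, rfl⟩
  rw [finRotate_eq_add_one hn, Sym2.map_pair_eq]
  rw [mem_polygonB hn]
  right
  constructor
  · have h := fin_sub_val_parity hn m (k + 1)
    have h2 := fin_add_one_val hn k
    have h3 : (k.val + 1) % (2 * n) % 2 = (k.val + 1) % 2 := Nat.mod_mod_of_dvd _ ⟨n, rfl⟩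
    rw [Nat.even_iff] at hk hm ⊢
    omega
  · rw [sub_add_eq_sub_sub]
    exact (sub_add_cancel _ _).symm

lemma polygonW_closed_sub [NeZero (2 * n)] (hn : 1 ≤ n) (m : Fin (2 * n)) (hm : ¬ Even m.val) :
    ∀ p ∈ polygonW n, Sym2.map (m - ·) p ∈ polygonW n := by
  rintro p ⟨k, hk, rfl⟩
  rw [finRotate_eq_add_one hn, Sym2.map_pair_eq]
  rw [mem_polygonW hn]
  right
  constructor
  · have h := fin_sub_val_parity hn m (k + 1)
    have h2 := fin_add_one_val hn k
    have h3 : (k.val + 1) % (2 * n) % 2 = (k.val + 1) % 2 := Nat.mod_mod_of_dvd _ ⟨n, rfl⟩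
    rw [Nat.even_iff] at hk hm ⊢
    omega
  · rw [sub_add_eq_sub_sub]
    exact (sub_add_cancel _ _).symm

/-- the subgroup of permutations preserving the polygon structure -/
def polyAut (n : ℕ) : Subgroup (Equiv.Perm (Fin (2 * n))) where
  carrier := {σ | Sym2.map ⇑σ '' polygonB n = polygonB n ∧ Sym2.map ⇑σ '' polygonW n = polygonW n}
  one_mem' := by
    constructor <;>
      (rw [show ⇑(1 : Equiv.Perm (Fin (2 * n))) = id from rfl, Sym2.map_id, Set.image_id])
  mul_mem' := by
    rintro σ τ ⟨hB1, hW1⟩ ⟨hB2, hW2⟩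
    constructor
    · rw [sym2_map_image_comp, hB2, hB1]
    · rw [sym2_map_image_comp, hW2, hW1]
  inv_mem' := by
    rintro σ ⟨hB1, hW1⟩
    have key : ∀ A : Set (Sym2 (Fin (2 * n))),
        Sym2.map ⇑σ '' A = A → Sym2.map ⇑σ⁻¹ '' A = A := by
      intro A hA
      conv_lhs => rw [← hA]
      rw [← sym2_map_image_comp, inv_mul_cancel]
      rw [show ⇑(1 : Equiv.Perm (Fin (2 * n))) = id from rfl, Sym2.map_id, Set.image_id]
    exact ⟨key _ hB1, key _ hW1⟩

lemma addRight_mem_polyAut [NeZero (2 * n)] (hn : 1 ≤ n) (m : Fin (2 * n)) (hm : Even m.val) :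
    Equiv.addRight m ∈ polyAut n := by
  haveI : NeZero (2 * n) := ⟨by omega⟩
  have hcoe : ⇑(Equiv.addRight m) = (· + m) := rfl
  have hmneg : Even (-m).val := by
    have := fin_neg_val_parity hn m
    rw [Nat.even_iff] at hm ⊢
    omega
  constructor
  · rw [hcoe]
    exact image_eq_of_closed (fun x => neg_add_cancel_right x m)
      (polygonB_closed_add hn m hm) (polygonB_closed_add hn (-m) hmneg)
  · rw [hcoe]
    exact image_eq_of_closed (fun x => neg_add_cancel_right x m)
      (polygonW_closed_add hn m hm) (polygonW_closed_add hn (-m) hmneg)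

lemma subLeft_mem_polyAut [NeZero (2 * n)] (hn : 1 ≤ n) (m : Fin (2 * n)) (hm : ¬ Even m.val) :
    Equiv.subLeft m ∈ polyAut n := by
  haveI : NeZero (2 * n) := ⟨by omega⟩
  have hcoe : ⇑(Equiv.subLeft m) = (m - ·) := by
    funext x; exact Equiv.subLeft_apply m x
  constructor
  · rw [hcoe]
    exact image_eq_of_closed (fun x => sub_sub_cancel m x)
      (polygonB_closed_sub hn m hm) (polygonB_closed_sub hn m hm)
  · rw [hcoe]
    exact image_eq_of_closed (fun x => sub_sub_cancel m x)
      (polygonW_closed_sub hn m hm) (polygonW_closed_sub hn m hm)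

lemma polyAut_fix_zero [NeZero (2 * n)] (hn : 1 ≤ n) (g : Equiv.Perm (Fin (2 * n)))
    (hg : g ∈ polyAut n) (h0 : g 0 = 0) : g = 1 := by
  haveI : NeZero (2 * n) := ⟨by omega⟩
  have key : ∀ m (hm : m < 2 * n), g ⟨m, hm⟩ = ⟨m, hm⟩ := by
    intro m
    induction m with
    | zero =>
      intro hm
      have h : (⟨0, hm⟩ : Fin (2 * n)) = 0 := by apply Fin.ext; simp
      rw [h, h0]
    | succ m ih =>
      intro hm
      have hm' : m < 2 * n := by omega
      have hkm := ih hm'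
      have hadd : (⟨m, hm'⟩ : Fin (2 * n)) + 1 = ⟨m + 1, hm⟩ := by
        apply Fin.ext
        rw [fin_add_one_val hn]
        exact Nat.mod_eq_of_lt hm
      by_cases he : Even m
      · have hpair : s((⟨m, hm'⟩ : Fin (2 * n)), (⟨m + 1, hm⟩ : Fin (2 * n))) ∈ polygonB n := by
          rw [mem_polygonB hn]
          exact Or.inl ⟨he, hadd.symm⟩
        have himg : s((⟨m, hm'⟩ : Fin (2 * n)), g ⟨m + 1, hm⟩) ∈ polygonB n := by
          rw [← hg.1]
          refine ⟨s((⟨m, hm'⟩ : Fin (2 * n)), (⟨m + 1, hm⟩ : Fin (2 * n))), hpair, ?_⟩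
          rw [Sym2.map_pair_eq, hkm]
        rw [mem_polygonB hn] at himg
        rcases himg with ⟨_, hb⟩ | ⟨hev, hb⟩
        · rw [hb, hadd]
        · exfalso
          have hval : m = (g ⟨m + 1, hm⟩ + 1).val := congrArg Fin.val hb
          rw [fin_add_one_val hn] at hval
          set x := g ⟨m + 1, hm⟩ with hxdef
          rcases Nat.lt_or_ge (x.val + 1) (2 * n) with hlt | hge
          · rw [Nat.mod_eq_of_lt hlt] at hval
            rw [Nat.even_iff] at he hev
            omega
          · have hx : x.val = 2 * n - 1 := by have := x.isLt; omega
            rw [Nat.even_iff, hx] at hev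
            omega
      · have hpair : s((⟨m, hm'⟩ : Fin (2 * n)), (⟨m + 1, hm⟩ : Fin (2 * n))) ∈ polygonW n := by
          rw [mem_polygonW hn]
          exact Or.inl ⟨he, hadd.symm⟩
        have himg : s((⟨m, hm'⟩ : Fin (2 * n)), g ⟨m + 1, hm⟩) ∈ polygonW n := by
          rw [← hg.2]
          refine ⟨s((⟨m, hm'⟩ : Fin (2 * n)), (⟨m + 1, hm⟩ : Fin (2 * n))), hpair, ?_⟩
          rw [Sym2.map_pair_eq, hkm]
        rw [mem_polygonW hn] at himg
        rcases himg with ⟨_, hb⟩ | ⟨hev, hb⟩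
        · rw [hb, hadd]
        · exfalso
          have hval : m = (g ⟨m + 1, hm⟩ + 1).val := congrArg Fin.val hb
          rw [fin_add_one_val hn] at hval
          set x := g ⟨m + 1, hm⟩ with hxdef
          rcases Nat.lt_or_ge (x.val + 1) (2 * n) with hlt | hge
          · rw [Nat.mod_eq_of_lt hlt] at hval
            rw [Nat.even_iff] at he hev
            omega
          · have hx : x.val = 2 * n - 1 := by have := x.isLt; omega
            rw [hx] at hval
            have hs : 2 * n - 1 + 1 = 2 * n := by omega
            rw [hs, Nat.mod_self] at hval
            rw [Nat.even_iff] at he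
            omega
  apply Equiv.ext
  intro k
  have h := key k.val k.isLt
  have hk : (⟨k.val, k.isLt⟩ : Fin (2 * n)) = k := rfl
  rw [hk] at h
  simpa using h

lemma polyAut_card (hn : 1 ≤ n) : Nat.card (polyAut n) = 2 * n := by
  haveI : NeZero (2 * n) := ⟨by omega⟩
  have hbij : Function.Bijective
      (fun h : polyAut n => ((h : Equiv.Perm (Fin (2 * n))) 0 : Fin (2 * n))) := by
    constructor
    · intro h h' heq
      simp only at heq
      set g : Equiv.Perm (Fin (2 * n)) := (↑h' : Equiv.Perm (Fin (2 * n)))⁻¹ * ↑h with hgdef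
      have hgmem : g ∈ polyAut n := (polyAut n).mul_mem ((polyAut n).inv_mem h'.2) h.2
      have hg0 : g 0 = 0 := by
        rw [hgdef]
        show (↑h' : Equiv.Perm (Fin (2 * n)))⁻¹ ((↑h : Equiv.Perm (Fin (2 * n))) 0) = 0
        rw [heq]
        exact Equiv.symm_apply_apply _ _
      have := polyAut_fix_zero hn g hgmem hg0
      rw [hgdef] at this
      have h2 : (↑h : Equiv.Perm (Fin (2 * n))) = ↑h' := by
        have := inv_mul_eq_one.mp this
        exact this.symm
      exact Subtype.ext h2
    · intro m
      rcases Nat.even_or_odd m.val with he | ho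
      · refine ⟨⟨Equiv.addRight m, addRight_mem_polyAut hn m he⟩, ?_⟩
        show (Equiv.addRight m) 0 = m
        show (0 : Fin (2 * n)) + m = m
        exact zero_add m
      · have he : ¬ Even m.val := by rw [Nat.even_iff]; rw [Nat.odd_iff] at ho; omega
        refine ⟨⟨Equiv.subLeft m, subLeft_mem_polyAut hn m he⟩, ?_⟩
        show (Equiv.subLeft m) 0 = m
        rw [Equiv.subLeft_apply]
        exact sub_zero m
  have h := Nat.card_eq_of_bijective _ hbij
  rw [h, Nat.card_eq_fintype_card, Fintype.card_fin]

end Polygon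


end CvL

/-- Proposition 1.8 (conservative versus liberal summation): for every map `M₀`
with one face, the number of triples `(B',W',E')` of pair-partitions of
`{1,…,2n}` with `L(B',W')` a single polygon and with underlying unlabeled map
equal to that of `M₀` equals `(2n−1)!` times the number of pairings `E` of the
edge-sides of the fixed labeled `2n`-gon whose resulting map has the same
underlying unlabeled map as `M₀`. -/
theorem conservative_vs_liberal (n : ℕ) (hn : 1 ≤ n) (M₀ : PMap (Fin (2 * n)))
    (hM₀ : M₀.IsMap) (hX : M₀.X = Set.univ) (hface : OnePolygon M₀) :
    Nat.card {M : PMap (Fin (2 * n)) //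
        M.IsMap ∧ M.X = Set.univ ∧ OnePolygon M ∧ SameUnlabeled M M₀}
    = (2 * n - 1).factorial *
      Nat.card {E : Set (Sym2 (Fin (2 * n))) //
        IsPairPartitionOn Set.univ E ∧
        SameUnlabeled (PMap.mk Set.univ (polygonB n) (polygonW n) E) M₀} := by
  classical
  haveI : NeZero (2 * n) := ⟨by omega⟩
  obtain ⟨E₀, ρ, hM₀eq⟩ := CvL.exists_polygon_relabel n hn M₀ hM₀ hX hface
  set P : PMap (Fin (2 * n)) := PMap.mk Set.univ (polygonB n) (polygonW n) E₀ with hPdef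
  have hsmul : ∀ (σ : Equiv.Perm (Fin (2 * n))) (M : PMap (Fin (2 * n))),
      σ • M = M.relabel σ := fun _ _ => rfl
  have hP : P = M₀.relabel ρ⁻¹ := by
    rw [hM₀eq, CvL.relabel_relabel_inv]
  have hPmap : P.IsMap := by rw [hP]; exact CvL.isMap_relabel hM₀ ρ⁻¹
  have hPface : OnePolygon P := by rw [hP]; exact CvL.onePolygon_relabel hface ρ⁻¹
  have hPX : P.X = Set.univ := rfl
  -- the first subtype is equivalent to the orbit of P under the full permutation group
  have hiff : ∀ M : PMap (Fin (2 * n)),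
      (M.IsMap ∧ M.X = Set.univ ∧ OnePolygon M ∧ SameUnlabeled M M₀) ↔
      M ∈ MulAction.orbit (Equiv.Perm (Fin (2 * n))) P := by
    intro M
    constructor
    · rintro ⟨_, _, _, π, hπ⟩
      rw [MulAction.mem_orbit_iff]
      refine ⟨π⁻¹ * ρ, ?_⟩
      rw [hsmul, CvL.relabel_mul, ← hM₀eq, hπ, CvL.relabel_relabel_inv]
    · intro hM
      rw [MulAction.mem_orbit_iff] at hM
      obtain ⟨σ, rfl⟩ := hM
      rw [hsmul]
      refine ⟨CvL.isMap_relabel hPmap σ, ?_, CvL.onePolygon_relabel hPface σ, ?_⟩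
      · show (⇑σ) '' P.X = Set.univ
        rw [hPX, Set.image_univ, Equiv.range_eq_univ]
      · refine ⟨ρ * σ⁻¹, ?_⟩
        rw [← CvL.relabel_mul]
        rw [hM₀eq]
        congr 1
        rw [mul_assoc, inv_mul_cancel, mul_one]
  have e1 : {M : PMap (Fin (2 * n)) //
        M.IsMap ∧ M.X = Set.univ ∧ OnePolygon M ∧ SameUnlabeled M M₀} ≃
      MulAction.orbit (Equiv.Perm (Fin (2 * n))) P :=
    Equiv.subtypeEquivRight hiff
  -- the second subtype is equivalent to the orbit of P under polyAut
  have hmk_orbit : ∀ E : Set (Sym2 (Fin (2 * n))), IsPairPartitionOn Set.univ E →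
      SameUnlabeled (PMap.mk Set.univ (polygonB n) (polygonW n) E) M₀ →
      (PMap.mk Set.univ (polygonB n) (polygonW n) E) ∈ MulAction.orbit (CvL.polyAut n) P := by
    rintro E hpp ⟨π, hπ⟩
    have hME : PMap.mk Set.univ (polygonB n) (polygonW n) E = P.relabel (π⁻¹ * ρ) := by
      rw [CvL.relabel_mul, ← hM₀eq, hπ, CvL.relabel_relabel_inv]
    have hmem : (π⁻¹ * ρ) ∈ CvL.polyAut n := by
      constructor
      · have hB := congrArg PMap.B hME
        exact hB.symm
      · have hW := congrArg PMap.W hME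
        exact hW.symm
    rw [MulAction.mem_orbit_iff]
    exact ⟨⟨π⁻¹ * ρ, hmem⟩, hME.symm⟩
  have horbit_shape : ∀ M ∈ MulAction.orbit (CvL.polyAut n) P,
      PMap.mk Set.univ (polygonB n) (polygonW n) M.E = M ∧
      IsPairPartitionOn Set.univ M.E ∧ SameUnlabeled M M₀ := by
    intro M hM
    rw [MulAction.mem_orbit_iff] at hM
    obtain ⟨h, rfl⟩ := hM
    have hrel : (h : Equiv.Perm (Fin (2 * n))) • P = P.relabel (h : Equiv.Perm (Fin (2 * n))) := rfl
    have hsub : ((h : Equiv.Perm (Fin (2 * n))) • P : PMap (Fin (2 * n))) = h • P := rfl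
    rw [← hsub, hrel]
    refine ⟨?_, ?_, ?_⟩
    · -- the relabelled map has the same B, W, X
      have h1 : (P.relabel (h : Equiv.Perm (Fin (2 * n)))).X = Set.univ := by
        show (⇑(h : Equiv.Perm (Fin (2 * n)))) '' P.X = Set.univ
        rw [hPX, Set.image_univ, Equiv.range_eq_univ]
      have h2 : (P.relabel (h : Equiv.Perm (Fin (2 * n)))).B = polygonB n := h.2.1
      have h3 : (P.relabel (h : Equiv.Perm (Fin (2 * n)))).W = polygonW n := h.2.2
      cases hrem : P.relabel (h : Equiv.Perm (Fin (2 * n))) with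
      | mk X B W E =>
        rw [hrem] at h1 h2 h3
        simp only at h1 h2 h3 ⊢
        rw [h1, h2, h3]
    · have := CvL.isPairPartitionOn_relabel (hX ▸ hM₀.2.2) ρ⁻¹
      have hE : (P.relabel (h : Equiv.Perm (Fin (2 * n)))).IsMap :=
        CvL.isMap_relabel hPmap _
      have hXX : (P.relabel (h : Equiv.Perm (Fin (2 * n)))).X = Set.univ := by
        show (⇑(h : Equiv.Perm (Fin (2 * n)))) '' P.X = Set.univ
        rw [hPX, Set.image_univ, Equiv.range_eq_univ]
      have := hE.2.2
      rw [hXX] at this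
      exact this
    · refine ⟨ρ * (h : Equiv.Perm (Fin (2 * n)))⁻¹, ?_⟩
      rw [← CvL.relabel_mul, hM₀eq]
      congr 1
      rw [mul_assoc, inv_mul_cancel, mul_one]
  have e2 : {E : Set (Sym2 (Fin (2 * n))) //
        IsPairPartitionOn Set.univ E ∧
        SameUnlabeled (PMap.mk Set.univ (polygonB n) (polygonW n) E) M₀} ≃
      MulAction.orbit (CvL.polyAut n) P :=
    { toFun := fun E => ⟨PMap.mk Set.univ (polygonB n) (polygonW n) E.1,
        hmk_orbit E.1 E.2.1 E.2.2⟩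
      invFun := fun M => ⟨M.1.E, (horbit_shape M.1 M.2).2.1, by
        have hs := (horbit_shape M.1 M.2).1
        rw [hs]
        exact (horbit_shape M.1 M.2).2.2⟩
      left_inv := fun E => Subtype.ext rfl
      right_inv := fun M => Subtype.ext (horbit_shape M.1 M.2).1 }
  -- stabilizers agree
  have hstabmem : ∀ τ : Equiv.Perm (Fin (2 * n)), τ ∈ MulAction.stabilizer
      (Equiv.Perm (Fin (2 * n))) P → τ ∈ CvL.polyAut n := by
    intro τ hτ
    have hτ' : P.relabel τ = P := hτ
    constructor
    · exact congrArg PMap.B hτ'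
    · exact congrArg PMap.W hτ'
  have e3 : MulAction.stabilizer (CvL.polyAut n) P ≃
      MulAction.stabilizer (Equiv.Perm (Fin (2 * n))) P :=
    { toFun := fun σ => ⟨(σ.1 : Equiv.Perm (Fin (2 * n))), σ.2⟩
      invFun := fun τ => ⟨⟨τ.1, hstabmem τ.1 τ.2⟩, τ.2⟩
      left_inv := fun σ => Subtype.ext (Subtype.ext rfl)
      right_inv := fun τ => Subtype.ext rfl }
  -- orbit-stabilizer for both groups
  have hos1 := Nat.card_congr
    (MulAction.orbitProdStabilizerEquivGroup (Equiv.Perm (Fin (2 * n))) P)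
  have hos2 := Nat.card_congr
    (MulAction.orbitProdStabilizerEquivGroup (CvL.polyAut n) P)
  rw [Nat.card_prod] at hos1 hos2
  have hcardG : Nat.card (Equiv.Perm (Fin (2 * n))) = (2 * n).factorial := by
    rw [Nat.card_eq_fintype_card, Fintype.card_perm, Fintype.card_fin]
  have hcardH : Nat.card (CvL.polyAut n) = 2 * n := CvL.polyAut_card hn
  have hstab : Nat.card (MulAction.stabilizer (CvL.polyAut n) P) =
      Nat.card (MulAction.stabilizer (Equiv.Perm (Fin (2 * n))) P) :=
    Nat.card_congr e3
  have hspos : 0 < Nat.card (MulAction.stabilizer (Equiv.Perm (Fin (2 * n))) P) :=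
    Nat.card_pos
  have h1 : Nat.card {M : PMap (Fin (2 * n)) //
      M.IsMap ∧ M.X = Set.univ ∧ OnePolygon M ∧ SameUnlabeled M M₀} *
      Nat.card (MulAction.stabilizer (Equiv.Perm (Fin (2 * n))) P)
      = (2 * n).factorial := by
    rw [Nat.card_congr e1]
    exact hos1.trans hcardG
  have h2 : Nat.card {E : Set (Sym2 (Fin (2 * n))) //
      IsPairPartitionOn Set.univ E ∧
      SameUnlabeled (PMap.mk Set.univ (polygonB n) (polygonW n) E) M₀} *
      Nat.card (MulAction.stabilizer (Equiv.Perm (Fin (2 * n))) P)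
      = 2 * n := by
    rw [Nat.card_congr e2, ← hstab]
    exact hos2.trans hcardH
  have hfact : ∀ N : ℕ, 1 ≤ N → N.factorial = (N - 1).factorial * N := by
    intro N hN
    obtain ⟨m, rfl⟩ : ∃ m, N = m + 1 := ⟨N - 1, by omega⟩
    rw [Nat.factorial_succ, Nat.add_sub_cancel, Nat.mul_comm]
  apply Nat.eq_of_mul_eq_mul_right hspos
  rw [h1, mul_assoc, h2]
  exact hfact (2 * n) (by omega)

end
end
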